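/- arXiv:2310.15611 — 12 statements merged into one kernel-verified Lean document; each statement's English description precedes it below -/
import Mathlib

section
/- Let k be any field, R = k[x_1,…,x_n], 1 ≤ i < j ≤ n, and I = (x_1^2,…,x_n^2) + RLex(x_i x_j). Then the Hilbert series of A = R/I is HS(A;t) = (1+t)^{n−j} (1 + j·t + (j−i−1)·t^2). -/
open MvPolynomial

/-- The degree-`m` graded piece of the quotient `R/I`, as the image of the
homogeneous polynomials of degree `m`. -/
noncomputable def quotPiece {n : ℕ} (k : Type*) [Field k]
    (I : Ideal (MvPolynomial (Fin n) k)) (m : ℕ) :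
    Submodule k (MvPolynomial (Fin n) k ⧸ I) :=
  (MvPolynomial.homogeneousSubmodule (Fin n) k m).map (Ideal.Quotient.mkₐ k I).toLinearMap

/-- The ideal `(x_1^2, …, x_n^2)` generated by the squares of all variables. -/
noncomputable def squaresIdeal (k : Type*) [Field k] (n : ℕ) : Ideal (MvPolynomial (Fin n) k) :=
  Ideal.span (Set.range fun a : Fin n => MvPolynomial.X a ^ 2)

/-- `RLex(x_i x_j)`: the ideal generated by all squarefree quadratic monomials
`x_k x_l` (`k < l`) which are `≥ x_i x_j` in the reverse lexicographic order
with `x_1 > ⋯ > x_n`, i.e. those with `l < j`, or `l = j` and `k ≤ i`.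
Variables are `1`-indexed: `x_m` corresponds to `X ⟨m-1⟩`. -/
noncomputable def RLexIdeal (k : Type*) [Field k] (n i j : ℕ) : Ideal (MvPolynomial (Fin n) k) :=
  Ideal.span { f | ∃ a b : Fin n, a < b ∧
    ((b : ℕ) + 1 < j ∨ ((b : ℕ) + 1 = j ∧ (a : ℕ) + 1 ≤ i)) ∧
    f = MvPolynomial.X a * MvPolynomial.X b }




namespace HS1

variable {n : ℕ}

def Forb (i j : ℕ) (a b : Fin n) : Prop :=
  a < b ∧ ((b : ℕ) + 1 < j ∨ ((b : ℕ) + 1 = j ∧ (a : ℕ) + 1 ≤ i))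

instance (i j : ℕ) (a b : Fin n) : Decidable (Forb i j a b) := by
  unfold Forb; infer_instance

def Adm (i j : ℕ) (S : Finset (Fin n)) : Prop :=
  ∀ a ∈ S, ∀ b ∈ S, ¬ Forb i j a b

instance (i j : ℕ) (S : Finset (Fin n)) : Decidable (Adm i j S) := by
  unfold Adm; infer_instance

noncomputable def eS (S : Finset (Fin n)) : Fin n →₀ ℕ := ∑ a ∈ S, Finsupp.single a 1

lemma eS_apply (S : Finset (Fin n)) (b : Fin n) : eS S b = if b ∈ S then 1 else 0 := by
  classical
  rw [eS, Finsupp.finset_sum_apply]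
  simp [Finsupp.single_apply]

lemma support_eS (S : Finset (Fin n)) : (eS S).support = S := by
  ext b
  rw [Finsupp.mem_support_iff, eS_apply]
  split <;> simp_all

lemma eS_le_one (S : Finset (Fin n)) (b : Fin n) : eS S b ≤ 1 := by
  rw [eS_apply]; split <;> omega

lemma degree_eS (S : Finset (Fin n)) : (eS S).degree = S.card := by
  rw [Finsupp.degree_apply, support_eS]
  rw [Finset.card_eq_sum_ones S]
  exact Finset.sum_congr rfl fun b hb => by rw [eS_apply, if_pos hb]

lemma sqfree_eq (d : Fin n →₀ ℕ) (h : ∀ a, d a ≤ 1) : d = eS d.support := by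
  ext b
  rw [eS_apply]
  by_cases hb : b ∈ d.support
  · have h1 := Finsupp.mem_support_iff.mp hb
    have h2 := h b
    rw [if_pos hb]; omega
  · rw [if_neg hb]
    exact Finsupp.notMem_support_iff.mp hb

def Gens (i j : ℕ) : Set (Fin n →₀ ℕ) :=
  {g | (∃ a : Fin n, g = Finsupp.single a 2) ∨
       ∃ a b : Fin n, Forb i j a b ∧ g = Finsupp.single a 1 + Finsupp.single b 1}

lemma ideal_eq (k : Type*) [Field k] (n i j : ℕ) :
    squaresIdeal k n + RLexIdeal k n i j =
      Ideal.span ((fun d => MvPolynomial.monomial d (1 : k)) '' Gens i j) := by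
  have h1 : (Set.range fun a : Fin n => (MvPolynomial.X a : MvPolynomial (Fin n) k) ^ 2) =
      (fun d => MvPolynomial.monomial d (1 : k)) ''
        {g : Fin n →₀ ℕ | ∃ a : Fin n, g = Finsupp.single a 2} := by
    ext f
    constructor
    · rintro ⟨a, rfl⟩
      exact ⟨Finsupp.single a 2, ⟨a, rfl⟩, X_pow_eq_monomial.symm⟩
    · rintro ⟨g, ⟨a, rfl⟩, rfl⟩
      exact ⟨a, X_pow_eq_monomial⟩
  have h2 : {f : MvPolynomial (Fin n) k | ∃ a b : Fin n, a < b ∧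
        ((b : ℕ) + 1 < j ∨ ((b : ℕ) + 1 = j ∧ (a : ℕ) + 1 ≤ i)) ∧
        f = MvPolynomial.X a * MvPolynomial.X b} =
      (fun d => MvPolynomial.monomial d (1 : k)) ''
        {g : Fin n →₀ ℕ | ∃ a b : Fin n, Forb i j a b ∧
          g = Finsupp.single a 1 + Finsupp.single b 1} := by
    have key : ∀ a b : Fin n, (MvPolynomial.X a * MvPolynomial.X b : MvPolynomial (Fin n) k)
        = MvPolynomial.monomial (Finsupp.single a 1 + Finsupp.single b 1) 1 := by
      intro a b
      rw [X, X, monomial_mul, one_mul]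
    ext f
    constructor
    · rintro ⟨a, b, hab, hc, rfl⟩
      exact ⟨_, ⟨a, b, ⟨hab, hc⟩, rfl⟩, (key a b).symm⟩
    · rintro ⟨g, ⟨a, b, ⟨hab, hc⟩, rfl⟩, rfl⟩
      exact ⟨a, b, hab, hc, (key a b).symm⟩
  rw [squaresIdeal, RLexIdeal, h1, h2, Submodule.add_eq_sup, ← Ideal.span_union, ← Set.image_union]
  rfl

lemma exists_gen_le_iff (i j : ℕ) (d : Fin n →₀ ℕ) :
    (∃ g ∈ Gens i j, g ≤ d) ↔ ¬ ((∀ a, d a ≤ 1) ∧ Adm i j d.support) := by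
  constructor
  · rintro ⟨g, hg | hg, hle⟩ ⟨h1, h2⟩
    · obtain ⟨a, rfl⟩ := hg
      have := Finsupp.le_def.mp hle a
      rw [Finsupp.single_apply, if_pos rfl] at this
      have := h1 a
      omega
    · obtain ⟨a, b, hf, rfl⟩ := hg
      have hab : a ≠ b := ne_of_lt hf.1
      have ha := Finsupp.le_def.mp hle a
      have hb := Finsupp.le_def.mp hle b
      rw [Finsupp.add_apply, Finsupp.single_apply, Finsupp.single_apply, if_pos rfl,
        if_neg (by simpa using hab.symm)] at ha
      rw [Finsupp.add_apply, Finsupp.single_apply, Finsupp.single_apply, if_pos rfl,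
        if_neg (by simpa using hab)] at hb
      exact h2 a (Finsupp.mem_support_iff.mpr (by omega))
        b (Finsupp.mem_support_iff.mpr (by omega)) hf
  · intro h
    by_cases h1 : ∀ a, d a ≤ 1
    · have h2 : ¬ Adm i j d.support := fun h2 => h ⟨h1, h2⟩
      rw [Adm] at h2
      push_neg at h2
      obtain ⟨a, ha, b, hb, hf⟩ := h2
      have hab : a ≠ b := ne_of_lt hf.1
      have da := Finsupp.mem_support_iff.mp ha
      have db := Finsupp.mem_support_iff.mp hb
      refine ⟨Finsupp.single a 1 + Finsupp.single b 1, Or.inr ⟨a, b, hf, rfl⟩, ?_⟩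
      rw [Finsupp.le_def]
      intro c
      rw [Finsupp.add_apply, Finsupp.single_apply, Finsupp.single_apply]
      rcases eq_or_ne a c with rfl | hac
      · rw [if_pos rfl, if_neg (by simpa using hab.symm)]
        omega
      · rw [if_neg (by simpa using hac)]
        rcases eq_or_ne b c with rfl | hbc
        · rw [if_pos rfl]; omega
        · rw [if_neg (by simpa using hbc)]; omega
    · push_neg at h1
      obtain ⟨a, ha⟩ := h1
      refine ⟨Finsupp.single a 2, Or.inl ⟨a, rfl⟩, ?_⟩
      rw [Finsupp.le_def]
      intro c
      rw [Finsupp.single_apply]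
      rcases eq_or_ne a c with rfl | hac
      · rw [if_pos rfl]; omega
      · rw [if_neg (by simpa using hac)]; omega

end HS1
namespace HS1

lemma support_subset_of_mem_span {k : Type*} [Field k] {n : ℕ} (T : Set (Fin n →₀ ℕ))
    (f : MvPolynomial (Fin n) k)
    (hf : f ∈ Submodule.span k ((fun d => monomial d (1 : k)) '' T)) :
    ↑f.support ⊆ T := by
  classical
  induction hf using Submodule.span_induction with
  | mem x hx =>
    obtain ⟨d, hd, rfl⟩ := hx
    intro e he
    have h1 : coeff e (monomial d (1 : k)) ≠ 0 := MvPolynomial.mem_support_iff.mp he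
    rw [coeff_monomial] at h1
    by_cases hde : d = e
    · rwa [← hde]
    · rw [if_neg hde] at h1; exact absurd rfl h1
  | zero => simp
  | add x y _ _ hx hy =>
    intro e he
    rcases Finset.mem_union.mp (MvPolynomial.support_add he) with h | h
    · exact hx h
    · exact hy h
  | smul c x _ hx =>
    intro e he
    exact hx (MvPolynomial.support_smul he)

lemma finrank_quotPiece (k : Type*) [Field k] (n i j m : ℕ) :
    Module.finrank k (quotPiece k (squaresIdeal k n + RLexIdeal k n i j) m) =
      (Finset.univ.filter (fun S : Finset (Fin n) => Adm i j S ∧ S.card = m)).card := by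
  classical
  set I := squaresIdeal k n + RLexIdeal k n i j with hIdef
  have hIspan : I = Ideal.span ((fun d => MvPolynomial.monomial d (1 : k)) '' Gens i j) :=
    ideal_eq k n i j
  set w : {S : Finset (Fin n) // Adm i j S ∧ S.card = m} → MvPolynomial (Fin n) k :=
    fun S => monomial (eS S.1) 1 with hw
  have hinj : Function.Injective
      (fun S : {S : Finset (Fin n) // Adm i j S ∧ S.card = m} => eS S.1) := by
    intro S T h
    apply Subtype.ext
    rw [← support_eS S.1, ← support_eS T.1]
    simp only at h
    rw [h]
  have hw_li : LinearIndependent k w := by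
    have heq : w = (basisMonomials (Fin n) k) ∘
        (fun S : {S : Finset (Fin n) // Adm i j S ∧ S.card = m} => eS S.1) := by
      funext S; simp [hw, coe_basisMonomials]
    rw [heq]
    exact (basisMonomials (Fin n) k).linearIndependent.comp _ hinj
  set T : Set (Fin n →₀ ℕ) := {d | (∀ a, d a ≤ 1) ∧ Adm i j d.support} with hT
  have hrange : Set.range w ⊆ (fun d => monomial d (1 : k)) '' T := by
    rintro _ ⟨S, rfl⟩
    exact ⟨eS S.1, ⟨eS_le_one S.1, by rw [support_eS]; exact S.2.1⟩, rfl⟩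
  have hdisj : Disjoint (Submodule.span k (Set.range w))
      (LinearMap.ker (Ideal.Quotient.mkₐ k I).toLinearMap) := by
    rw [Submodule.disjoint_def]
    intro f hf hker
    have hsupp : ↑f.support ⊆ T :=
      support_subset_of_mem_span T f (Submodule.span_le.mpr
        (hrange.trans Submodule.subset_span) hf)
    have hfI : f ∈ I := by
      have h0 : (Ideal.Quotient.mkₐ k I) f = 0 := hker
      rwa [Ideal.Quotient.mkₐ_eq_mk, Ideal.Quotient.eq_zero_iff_mem] at h0
    rw [hIspan, mem_ideal_span_monomial_image] at hfI
    have hse : f.support = ∅ := by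
      by_contra hne
      obtain ⟨d, hd⟩ := Finset.nonempty_iff_ne_empty.mpr hne
      exact (exists_gen_le_iff i j d).mp (hfI d hd) (hsupp hd)
    exact support_eq_empty.mp hse
  set v : {S : Finset (Fin n) // Adm i j S ∧ S.card = m} → (MvPolynomial (Fin n) k ⧸ I) :=
    fun S => (Ideal.Quotient.mkₐ k I).toLinearMap (w S) with hv
  have hv_li : LinearIndependent k v := hw_li.map hdisj
  have hspan : quotPiece k I m = Submodule.span k (Set.range v) := by
    apply le_antisymm
    · rintro x ⟨f, hf, rfl⟩
      rw [SetLike.mem_coe, mem_homogeneousSubmodule] at hf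
      rw [← support_sum_monomial_coeff f, map_sum]
      apply Submodule.sum_mem
      intro d hd
      by_cases hstd : (∀ a, d a ≤ 1) ∧ Adm i j d.support
      · have hdm : d.degree = m := by
          rw [Finsupp.degree_eq_weight_one]
          exact hf (MvPolynomial.mem_support_iff.mp hd)
        have hcard : d.support.card = m := by
          have h1 := degree_eS d.support
          rw [← sqfree_eq d hstd.1] at h1
          omega
        have hmono : monomial d (coeff d f) = (coeff d f) • monomial d (1 : k) := by
          rw [smul_monomial, smul_eq_mul, mul_one]
        rw [hmono, map_smul]
        refine Submodule.smul_mem _ _ (Submodule.subset_span ⟨⟨d.support, hstd.2, hcard⟩, ?_⟩)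
        show (Ideal.Quotient.mkₐ k I).toLinearMap (monomial (eS d.support) 1) = _
        rw [← sqfree_eq d hstd.1]
      · have hmem : monomial d (coeff d f) ∈ I := by
          rw [hIspan, mem_ideal_span_monomial_image]
          intro xi hxi
          have h1 : coeff xi (monomial d (coeff d f)) ≠ 0 := MvPolynomial.mem_support_iff.mp hxi
          rw [coeff_monomial] at h1
          by_cases hde : d = xi
          · subst hde
            exact (exists_gen_le_iff i j d).mpr hstd
          · rw [if_neg hde] at h1; exact absurd rfl h1
        have h0 : (Ideal.Quotient.mkₐ k I).toLinearMap (monomial d (coeff d f)) = 0 := by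
          show Ideal.Quotient.mk I _ = 0
          rwa [Ideal.Quotient.eq_zero_iff_mem]
        rw [h0]
        exact Submodule.zero_mem _
    · rw [Submodule.span_le]
      rintro _ ⟨S, rfl⟩
      refine ⟨monomial (eS S.1) 1, ?_, rfl⟩
      rw [SetLike.mem_coe, mem_homogeneousSubmodule]
      exact isHomogeneous_monomial 1 (by rw [degree_eS]; exact S.2.2)
  rw [hspan, finrank_span_eq_card hv_li, Fintype.card_subtype]

end HS1
namespace HS1

lemma card_filter_interval (n l u : ℕ) (hu : u ≤ n) :
    (Finset.univ.filter (fun a : Fin n => l ≤ (a : ℕ) ∧ (a : ℕ) < u)).card = u - l := by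
  classical
  rw [← Finset.card_image_of_injective _ Fin.val_injective]
  have h : (Finset.univ.filter (fun a : Fin n => l ≤ (a : ℕ) ∧ (a : ℕ) < u)).image Fin.val
      = Finset.Ico l u := by
    ext x
    simp only [Finset.mem_image, Finset.mem_filter, Finset.mem_univ, true_and, Finset.mem_Ico]
    constructor
    · rintro ⟨a, ⟨h1, h2⟩, rfl⟩; exact ⟨h1, h2⟩
    · rintro ⟨h1, h2⟩; exact ⟨⟨x, lt_of_lt_of_le h2 hu⟩, ⟨h1, h2⟩, rfl⟩
  rw [h, Nat.card_Ico]

lemma forb_lt {n : ℕ} {i j : ℕ} {a b : Fin n} (h : Forb i j a b) :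
    (a : ℕ) < j ∧ (b : ℕ) < j := by
  obtain ⟨hab, hc⟩ := h
  rw [Fin.lt_def] at hab
  omega

section count

variable (n i j : ℕ)

def LoF : Finset (Fin n) := Finset.univ.filter (fun a : Fin n => (a : ℕ) < j)

def HiF : Finset (Fin n) := Finset.univ.filter (fun a : Fin n => j ≤ (a : ℕ))

def MidF : Finset (Fin n) :=
  Finset.univ.filter (fun a : Fin n => i ≤ (a : ℕ) ∧ (a : ℕ) < j - 1)

variable {n}

def jjF (h : 0 < j) (hjn : j ≤ n) : Fin n := ⟨j - 1, by omega⟩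

variable (hj : 0 < j) (hjn : j ≤ n)

def LowF : Finset (Finset (Fin n)) :=
  ({∅} : Finset (Finset (Fin n))) ∪ (LoF n j).image (fun a => {a})
    ∪ (MidF n i j).image (fun a => {a, jjF j hj hjn})

lemma card_LoF : (LoF n j).card = min j n := by
  have h : LoF n j = Finset.univ.filter (fun a : Fin n => 0 ≤ (a : ℕ) ∧ (a : ℕ) < min j n) := by
    ext a
    simp only [LoF, Finset.mem_filter, Finset.mem_univ, true_and]
    have := a.isLt
    omega
  rw [h, card_filter_interval n 0 (min j n) (min_le_right _ _)]
  omega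

lemma card_HiF : (HiF n j).card = n - j := by
  have h : HiF n j = Finset.univ.filter (fun a : Fin n => j ≤ (a : ℕ) ∧ (a : ℕ) < n) := by
    ext a
    simp only [HiF, Finset.mem_filter, Finset.mem_univ, true_and]
    have := a.isLt
    omega
  rw [h, card_filter_interval n j n le_rfl]

lemma card_MidF (hjn' : j - 1 ≤ n) : (MidF n i j).card = j - 1 - i := by
  rw [MidF, card_filter_interval n i (j - 1) hjn']

variable {i j}

lemma mem_LowF_subset {L : Finset (Fin n)} (hL : L ∈ LowF i j hj hjn) : L ⊆ LoF n j := by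
  rw [LowF, Finset.mem_union, Finset.mem_union] at hL
  rcases hL with (hL | hL) | hL
  · rw [Finset.mem_singleton] at hL
    subst hL; exact Finset.empty_subset _
  · obtain ⟨a, ha, rfl⟩ := Finset.mem_image.mp hL
    intro x hx
    rw [Finset.mem_singleton] at hx
    subst hx; exact ha
  · obtain ⟨a, ha, rfl⟩ := Finset.mem_image.mp hL
    rw [MidF, Finset.mem_filter] at ha
    intro x hx
    rw [Finset.mem_insert, Finset.mem_singleton] at hx
    rw [LoF, Finset.mem_filter]
    rcases hx with rfl | rfl
    · exact ⟨Finset.mem_univ _, by omega⟩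
    · exact ⟨Finset.mem_univ _, by show j - 1 < j; omega⟩

lemma adm_iff_inter (S : Finset (Fin n)) :
    Adm i j S ↔ Adm i j (S ∩ LoF n j) := by
  constructor
  · intro h a ha b hb
    exact h a (Finset.mem_inter.mp ha).1 b (Finset.mem_inter.mp hb).1
  · intro h a ha b hb hf
    obtain ⟨la, lb⟩ := forb_lt hf
    exact h a (Finset.mem_inter.mpr ⟨ha, Finset.mem_filter.mpr ⟨Finset.mem_univ _, la⟩⟩)
      b (Finset.mem_inter.mpr ⟨hb, Finset.mem_filter.mpr ⟨Finset.mem_univ _, lb⟩⟩) hf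

lemma adm_low {L : Finset (Fin n)} (hL : L ⊆ LoF n j) :
    Adm i j L ↔ L ∈ LowF i j hj hjn := by
  have hjj : ((jjF j hj hjn : Fin n) : ℕ) = j - 1 := rfl
  have hLlt : ∀ a ∈ L, (a : ℕ) < j := by
    intro a ha
    have := hL ha
    rw [LoF, Finset.mem_filter] at this
    exact this.2
  constructor
  · intro h
    have hcard : (L.erase (jjF j hj hjn)).card ≤ 1 := by
      rw [Finset.card_le_one]
      intro a ha b hb
      rw [Finset.mem_erase] at ha hb
      by_contra hab
      have ha' : (a : ℕ) < j - 1 := by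
        have h1 := hLlt a ha.2
        have h2 : (a : ℕ) ≠ j - 1 := fun hc => ha.1 (Fin.ext (by rw [hjj]; exact hc))
        omega
      have hb' : (b : ℕ) < j - 1 := by
        have h1 := hLlt b hb.2
        have h2 : (b : ℕ) ≠ j - 1 := fun hc => hb.1 (Fin.ext (by rw [hjj]; exact hc))
        omega
      rcases lt_trichotomy a b with hlt | heq | hlt
      · exact h a ha.2 b hb.2 ⟨hlt, Or.inl (by rw [Fin.lt_def] at hlt; omega)⟩
      · exact hab heq
      · exact h b hb.2 a ha.2 ⟨hlt, Or.inl (by rw [Fin.lt_def] at hlt; omega)⟩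
    by_cases hjjL : jjF j hj hjn ∈ L
    · have hL' : L = insert (jjF j hj hjn) (L.erase (jjF j hj hjn)) :=
        (Finset.insert_erase hjjL).symm
      rcases Finset.eq_empty_or_nonempty (L.erase (jjF j hj hjn)) with he | ⟨a, ha⟩
      · rw [LowF, Finset.mem_union, Finset.mem_union]
        left; right
        apply Finset.mem_image.mpr
        refine ⟨jjF j hj hjn, ?_, ?_⟩
        · rw [LoF, Finset.mem_filter]; exact ⟨Finset.mem_univ _, by rw [hjj]; omega⟩
        · rw [hL', he]; rfl
      · have hsing : L.erase (jjF j hj hjn) = {a} :=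
          Finset.eq_singleton_iff_unique_mem.mpr
            ⟨ha, fun b hb => Finset.card_le_one.mp hcard b hb a ha⟩
        rw [Finset.mem_erase] at ha
        have ha' : (a : ℕ) < j - 1 := by
          have h1 := hLlt a ha.2
          have h2 : (a : ℕ) ≠ j - 1 := fun hc => ha.1 (Fin.ext (by rw [hjj]; exact hc))
          omega
        have hia : i ≤ (a : ℕ) := by
          by_contra hia
          exact h a ha.2 (jjF j hj hjn) hjjL
            ⟨by rw [Fin.lt_def, hjj]; omega, Or.inr ⟨by rw [hjj]; omega, by omega⟩⟩
        rw [LowF, Finset.mem_union]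
        right
        apply Finset.mem_image.mpr
        refine ⟨a, ?_, ?_⟩
        · rw [MidF, Finset.mem_filter]; exact ⟨Finset.mem_univ _, hia, ha'⟩
        · rw [hL', hsing]
          rw [Finset.pair_comm]
    · have hL' : L = L.erase (jjF j hj hjn) := (Finset.erase_eq_of_notMem hjjL).symm
      rw [LowF, Finset.mem_union, Finset.mem_union]
      left
      rcases Finset.eq_empty_or_nonempty L with he | ⟨a, ha⟩
      · left; rw [he]; exact Finset.mem_singleton_self _
      · right
        have hsing : L = {a} := by
          rw [hL']
          apply Finset.eq_singleton_iff_unique_mem.mpr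
          have ha' : a ∈ L.erase (jjF j hj hjn) := by rw [← hL']; exact ha
          exact ⟨ha', fun b hb => Finset.card_le_one.mp hcard b hb a ha'⟩
        refine Finset.mem_image.mpr ⟨a, hL ha, hsing.symm⟩
  · intro hLow
    rw [LowF, Finset.mem_union, Finset.mem_union] at hLow
    rcases hLow with (hLow | hLow) | hLow
    · rw [Finset.mem_singleton] at hLow
      subst hLow
      intro a ha
      exact absurd ha (Finset.notMem_empty a)
    · obtain ⟨c, _, rfl⟩ := Finset.mem_image.mp hLow
      intro a ha b hb hf
      rw [Finset.mem_singleton] at ha hb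
      subst ha; subst hb
      exact lt_irrefl _ hf.1
    · obtain ⟨c, hc, rfl⟩ := Finset.mem_image.mp hLow
      rw [MidF, Finset.mem_filter] at hc
      intro a ha b hb hf
      obtain ⟨hab, hcond⟩ := hf
      rw [Fin.lt_def] at hab
      rw [Finset.mem_insert, Finset.mem_singleton] at ha hb
      have hcv := hc.2
      rcases ha with rfl | rfl <;> rcases hb with rfl | rfl <;>
        omega

end count

end HS1
namespace HS1

lemma card_adm (n i j m : ℕ) (hi : 1 ≤ i) (hij : i < j) (hjn : j ≤ n) :
    (Finset.univ.filter (fun S : Finset (Fin n) => Adm i j S ∧ S.card = m)).card =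
      (n - j).choose m + (if 1 ≤ m then j * (n - j).choose (m - 1) else 0)
        + (if 2 ≤ m then (j - 1 - i) * (n - j).choose (m - 2) else 0) := by
  classical
  have hj : 0 < j := by omega
  have hjj : ((jjF j hj hjn : Fin n) : ℕ) = j - 1 := rfl
  -- the sigma set
  set B : Finset (Σ _ : Finset (Fin n), Finset (Fin n)) :=
    (LowF i j hj hjn).sigma
      (fun L => (HiF n j).powerset.filter (fun T => L.card + T.card = m)) with hB
  have hdisjLoHi : ∀ T ⊆ HiF n j, T ∩ LoF n j = ∅ := by
    intro T hT
    apply Finset.eq_empty_iff_forall_notMem.mpr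
    intro x hx
    rw [Finset.mem_inter] at hx
    have h1 := hT hx.1
    rw [HiF, Finset.mem_filter] at h1
    have h2 := hx.2
    rw [LoF, Finset.mem_filter] at h2
    omega
  have hstep1 :
      (Finset.univ.filter (fun S : Finset (Fin n) => Adm i j S ∧ S.card = m)).card = B.card := by
    apply Finset.card_bij' (fun S _ => (⟨S ∩ LoF n j, S \ LoF n j⟩ : Σ _ : Finset (Fin n), Finset (Fin n)))
      (fun p _ => p.1 ∪ p.2)
    · intro S hS
      rw [Finset.mem_filter] at hS
      obtain ⟨-, hadm, hcard⟩ := hS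
      rw [hB, Finset.mem_sigma]
      constructor
      · exact (adm_low hj hjn (Finset.inter_subset_right)).mp ((adm_iff_inter S).mp hadm)
      · rw [Finset.mem_filter, Finset.mem_powerset]
        constructor
        · intro x hx
          rw [Finset.mem_sdiff] at hx
          rw [HiF, Finset.mem_filter]
          refine ⟨Finset.mem_univ _, ?_⟩
          have h2 := hx.2
          rw [LoF, Finset.mem_filter] at h2
          push_neg at h2
          exact h2 (Finset.mem_univ _)
        · rw [Finset.card_inter_add_card_sdiff, hcard]
    · intro p hp
      rw [hB, Finset.mem_sigma] at hp
      obtain ⟨hp1, hp2⟩ := hp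
      rw [Finset.mem_filter, Finset.mem_powerset] at hp2
      have hLsub : p.1 ⊆ LoF n j := mem_LowF_subset hj hjn hp1
      have hTL : p.2 ∩ LoF n j = ∅ := hdisjLoHi p.2 hp2.1
      have hdisj : Disjoint p.1 p.2 := by
        rw [Finset.disjoint_left]
        intro x hx1 hx2
        have : x ∈ p.2 ∩ LoF n j := Finset.mem_inter.mpr ⟨hx2, hLsub hx1⟩
        rw [hTL] at this
        exact Finset.notMem_empty x this
      rw [Finset.mem_filter]
      refine ⟨Finset.mem_univ _, ?_, ?_⟩
      · rw [adm_iff_inter]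
        have heq : (p.1 ∪ p.2) ∩ LoF n j = p.1 := by
          rw [Finset.union_inter_distrib_right, hTL, Finset.union_empty,
            Finset.inter_eq_left.mpr hLsub]
        rw [heq]
        exact (adm_low hj hjn hLsub).mpr hp1
      · rw [Finset.card_union_of_disjoint hdisj, hp2.2]
    · intro S hS
      simp only
      rw [Finset.union_comm, Finset.sdiff_union_inter]
    · intro p hp
      rw [hB, Finset.mem_sigma] at hp
      obtain ⟨hp1, hp2⟩ := hp
      rw [Finset.mem_filter, Finset.mem_powerset] at hp2
      have hLsub : p.1 ⊆ LoF n j := mem_LowF_subset hj hjn hp1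
      have hTL : p.2 ∩ LoF n j = ∅ := hdisjLoHi p.2 hp2.1
      have h1 : (p.1 ∪ p.2) ∩ LoF n j = p.1 := by
        rw [Finset.union_inter_distrib_right, hTL, Finset.union_empty,
          Finset.inter_eq_left.mpr hLsub]
      have h2 : (p.1 ∪ p.2) \ LoF n j = p.2 := by
        rw [Finset.union_sdiff_distrib]
        have h3 : p.1 \ LoF n j = ∅ := by
          rw [Finset.sdiff_eq_empty_iff_subset]; exact hLsub
        have h4 : p.2 \ LoF n j = p.2 := by
          rw [Finset.sdiff_eq_self_iff_disjoint, Finset.disjoint_left]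
          intro x hx hx2
          have : x ∈ p.2 ∩ LoF n j := Finset.mem_inter.mpr ⟨hx, hx2⟩
          rw [hTL] at this
          exact Finset.notMem_empty x this
        rw [h3, h4, Finset.empty_union]
      exact Sigma.ext h1 (heq_of_eq (by rw [h1, h2]))
  rw [hstep1, hB, Finset.card_sigma]
  have hHi : (HiF n j).card = n - j := card_HiF j
  have hG : ∀ L : Finset (Fin n),
      ((HiF n j).powerset.filter (fun T => L.card + T.card = m)).card
        = if L.card ≤ m then (n - j).choose (m - L.card) else 0 := by
    intro L
    by_cases hc : L.card ≤ m
    · rw [if_pos hc]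
      have he : (HiF n j).powerset.filter (fun T => L.card + T.card = m)
          = (HiF n j).powersetCard (m - L.card) := by
        rw [Finset.powersetCard_eq_filter]
        apply Finset.filter_congr
        intro T _
        constructor <;> (intro h; omega)
      rw [he, Finset.card_powersetCard, hHi]
    · rw [if_neg hc, Finset.card_eq_zero, Finset.filter_eq_empty_iff]
      intro T _
      omega
  rw [Finset.sum_congr rfl (fun L _ => hG L)]
  set A := (LoF n j).image (fun a : Fin n => ({a} : Finset (Fin n))) with hA
  set B2 := (MidF n i j).image
    (fun a : Fin n => ({a, jjF j hj hjn} : Finset (Fin n))) with hB2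
  have hcardA : ∀ x ∈ A, Finset.card x = 1 := by
    intro x hx
    obtain ⟨a, _, rfl⟩ := Finset.mem_image.mp hx
    exact Finset.card_singleton a
  have hmidlt : ∀ a ∈ MidF n i j, (a : ℕ) < j - 1 := by
    intro a ha
    rw [MidF, Finset.mem_filter] at ha
    exact ha.2.2
  have hcardB2 : ∀ x ∈ B2, Finset.card x = 2 := by
    intro x hx
    obtain ⟨a, ha, rfl⟩ := Finset.mem_image.mp hx
    have ha' := hmidlt a ha
    rw [Finset.card_insert_of_notMem, Finset.card_singleton]
    rw [Finset.mem_singleton]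
    intro hc
    have : (a : ℕ) = j - 1 := by rw [hc]; rfl
    omega
  have hd1 : Disjoint ({∅} : Finset (Finset (Fin n))) A := by
    rw [Finset.disjoint_left]
    intro x hx hx2
    rw [Finset.mem_singleton] at hx
    subst hx
    have := hcardA _ hx2
    simp at this
  have hd2 : Disjoint (({∅} : Finset (Finset (Fin n))) ∪ A) B2 := by
    rw [Finset.disjoint_left]
    intro x hx hx2
    have h2 := hcardB2 _ hx2
    rcases Finset.mem_union.mp hx with hx | hx
    · rw [Finset.mem_singleton] at hx
      subst hx
      simp at h2
    · have := hcardA _ hx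
      omega
  have hLowF : LowF i j hj hjn = (({∅} : Finset (Finset (Fin n))) ∪ A) ∪ B2 := rfl
  rw [hLowF, Finset.sum_union hd2, Finset.sum_union hd1, Finset.sum_singleton]
  have hsumA : ∑ L ∈ A, (if L.card ≤ m then (n - j).choose (m - L.card) else 0)
      = j * (if 1 ≤ m then (n - j).choose (m - 1) else 0) := by
    rw [hA, Finset.sum_image (fun x _ y _ h => Finset.singleton_inj.mp h)]
    rw [Finset.sum_congr rfl (fun a _ => by rw [Finset.card_singleton])]
    rw [Finset.sum_const, card_LoF, smul_eq_mul, min_eq_left hjn]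
  have hsumB2 : ∑ L ∈ B2, (if L.card ≤ m then (n - j).choose (m - L.card) else 0)
      = (j - 1 - i) * (if 2 ≤ m then (n - j).choose (m - 2) else 0) := by
    have hinj : ∀ x ∈ MidF n i j, ∀ y ∈ MidF n i j,
        ({x, jjF j hj hjn} : Finset (Fin n)) = {y, jjF j hj hjn} → x = y := by
      intro x hx y hy h
      have hx' := hmidlt x hx
      have hmx : x ∈ ({y, jjF j hj hjn} : Finset (Fin n)) := by
        rw [← h]
        exact Finset.mem_insert_self _ _
      rcases Finset.mem_insert.mp hmx with h1 | h1
      · exact h1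
      · rw [Finset.mem_singleton] at h1
        exfalso
        have : (x : ℕ) = j - 1 := by rw [h1]; rfl
        omega
    rw [hB2, Finset.sum_image hinj]
    rw [Finset.sum_congr rfl (fun a ha => by rw [hcardB2 _ (Finset.mem_image_of_mem _ ha)])]
    rw [Finset.sum_const, card_MidF i j (show j - 1 ≤ n by omega), smul_eq_mul]
  rw [hsumA, hsumB2]
  have h0 : (∅ : Finset (Fin n)).card = 0 := Finset.card_empty
  rw [h0]
  simp only [Nat.zero_le, if_true, Nat.sub_zero]
  split_ifs <;> omega

end HS1

namespace HS1

lemma coeff_rhs (N a b m : ℕ) :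
    ((1 + Polynomial.X) ^ N *
      (1 + Polynomial.C a * Polynomial.X + Polynomial.C b * Polynomial.X ^ 2) :
      Polynomial ℕ).coeff m =
    N.choose m + (if 1 ≤ m then a * N.choose (m - 1) else 0)
      + (if 2 ≤ m then b * N.choose (m - 2) else 0) := by
  have e1 : ((1 + Polynomial.X : Polynomial ℕ) ^ N *
        (1 + Polynomial.C a * Polynomial.X + Polynomial.C b * Polynomial.X ^ 2))
      = (1 + Polynomial.X) ^ N
        + ((1 + Polynomial.X) ^ N * Polynomial.C a) * Polynomial.X ^ 1
        + ((1 + Polynomial.X) ^ N * Polynomial.C b) * Polynomial.X ^ 2 := by ring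
  rw [e1, Polynomial.coeff_add, Polynomial.coeff_add, Polynomial.coeff_mul_X_pow',
    Polynomial.coeff_mul_X_pow', Polynomial.coeff_mul_C, Polynomial.coeff_mul_C]
  simp only [Polynomial.coeff_one_add_X_pow, Nat.cast_id]
  split_ifs <;> ring

end HS1

/-- The Hilbert series of `A = R/I` for `I = (x_1^2, …, x_n^2) + RLex(x_i x_j)` is
`(1+t)^{n-j} (1 + j·t + (j-i-1)·t^2)`. -/
theorem stmt1 (k : Type*) [Field k] (n i j : ℕ) (hi : 1 ≤ i) (hij : i < j) (hjn : j ≤ n)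
    (I : Ideal (MvPolynomial (Fin n) k))
    (hI : I = squaresIdeal k n + RLexIdeal k n i j) :
    ∀ m : ℕ, Module.finrank k (quotPiece k I m) =
      ((1 + Polynomial.X) ^ (n - j) *
        (1 + Polynomial.C j * Polynomial.X
          + Polynomial.C (j - i - 1) * Polynomial.X ^ 2) : Polynomial ℕ).coeff m := by
  intro m
  subst hI
  rw [HS1.finrank_quotPiece k n i j m, HS1.card_adm n i j m hi hij hjn,
    HS1.coeff_rhs (n - j) j (j - i - 1) m,
    show j - i - 1 = j - 1 - i by omega]
end

section
/- For any integers 1 ≤ i < j ≤ n, the polynomial (1+t)^{n−j} (1 + j·t + (j−i−1)·t^2) with real coefficients has only real roots; consequently its coefficient sequence is unimodal and log-concave. -/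
open MvPolynomial

open Polynomial

/-- Structural invariant: positive coefficients up to `d`, nonneg at `d+1`,
zero above, and log-concave. -/
def GoodSeq (p : Polynomial ℝ) (d : ℕ) : Prop :=
  (∀ k, k ≤ d → 0 < p.coeff k) ∧ 0 ≤ p.coeff (d+1) ∧ (∀ k, d+1 < k → p.coeff k = 0) ∧
  (∀ k, p.coeff k * p.coeff (k+2) ≤ p.coeff (k+1)^2)

lemma GoodSeq.nonneg {p : Polynomial ℝ} {d : ℕ} (h : GoodSeq p d) (k : ℕ) : 0 ≤ p.coeff k := by
  rcases le_or_gt k d with hk | hk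
  · exact (h.1 k hk).le
  rcases eq_or_lt_of_le (show d + 1 ≤ k from hk) with hk' | hk'
  · rw [← hk']; exact h.2.1
  · rw [h.2.2.1 k hk']

lemma GoodSeq.cross {p : Polynomial ℝ} {d : ℕ} (h : GoodSeq p d) (u : ℕ) :
    p.coeff u * p.coeff (u+3) ≤ p.coeff (u+1) * p.coeff (u+2) := by
  by_cases h1 : p.coeff (u+1) = 0
  · have : d + 1 < u + 3 := by
      by_contra hc
      exact absurd h1 (h.1 (u+1) (by omega)).ne'
    rw [h.2.2.1 (u+3) this, mul_zero]
    exact mul_nonneg (h.nonneg _) (h.nonneg _)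
  by_cases h2 : p.coeff (u+2) = 0
  · have : d + 1 < u + 3 := by
      by_contra hc
      exact absurd h2 (h.1 (u+2) (by omega)).ne'
    rw [h.2.2.1 (u+3) this, mul_zero]
    exact mul_nonneg (h.nonneg _) (h.nonneg _)
  have p1 : 0 < p.coeff (u+1) := (h.nonneg _).lt_of_ne' h1
  have p2 : 0 < p.coeff (u+2) := (h.nonneg _).lt_of_ne' h2
  have l1 := h.2.2.2 u
  have l2 := h.2.2.2 (u+1)
  have key := mul_le_mul l1 l2 (mul_nonneg (h.nonneg _) (h.nonneg _))
    (sq_nonneg _)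
  have : (u+1)+2 = u+3 := rfl
  rw [this] at l2
  nlinarith [h.nonneg u, h.nonneg (u+3), sq_nonneg (p.coeff (u+1)), mul_pos p1 p2]

lemma coeff_one_add_X_mul (p : Polynomial ℝ) (k : ℕ) :
    ((1 + Polynomial.X) * p).coeff (k+1) = p.coeff (k+1) + p.coeff k := by
  rw [add_mul, one_mul, Polynomial.coeff_add, Polynomial.coeff_X_mul]

lemma coeff_one_add_X_mul_zero (p : Polynomial ℝ) :
    ((1 + Polynomial.X) * p).coeff 0 = p.coeff 0 := by
  rw [add_mul, one_mul, Polynomial.coeff_add, Polynomial.mul_coeff_zero,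
    Polynomial.coeff_X_zero, zero_mul, add_zero]

lemma GoodSeq.step {p : Polynomial ℝ} {d : ℕ} (h : GoodSeq p d) :
    GoodSeq ((1 + Polynomial.X) * p) (d+1) := by
  refine ⟨?_, ?_, ?_, ?_⟩
  · intro k hk
    match k with
    | 0 => rw [coeff_one_add_X_mul_zero]; exact h.1 0 (Nat.zero_le _)
    | (t+1) =>
      rw [coeff_one_add_X_mul]
      have := h.1 t (by omega)
      have := h.nonneg (t+1)
      linarith
  · rw [coeff_one_add_X_mul]
    exact add_nonneg (h.nonneg _) (h.nonneg _)
  · intro k hk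
    match k, hk with
    | (t+1), hk =>
      rw [coeff_one_add_X_mul, h.2.2.1 (t+1) (by omega), h.2.2.1 t (by omega), add_zero]
  · intro k
    match k with
    | 0 =>
      rw [coeff_one_add_X_mul_zero, coeff_one_add_X_mul, coeff_one_add_X_mul]
      have l0 := h.2.2.2 0
      nlinarith [h.nonneg 0, h.nonneg 1, h.nonneg 2]
    | (u+1) =>
      rw [coeff_one_add_X_mul, coeff_one_add_X_mul, coeff_one_add_X_mul]
      have l1 := h.2.2.2 u
      have l2 := h.2.2.2 (u+1)
      have cr := h.cross u
      have : (u+1)+2 = u+3 := rfl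
      rw [this] at l2
      nlinarith [h.nonneg u, h.nonneg (u+1), h.nonneg (u+2), h.nonneg (u+3)]

/-- Peak extraction from a good sequence. -/
lemma GoodSeq.peak {p : Polynomial ℝ} {d : ℕ} (h : GoodSeq p d) :
    ∃ m ≤ p.natDegree,
      (∀ a b : ℕ, a ≤ b → b ≤ m → p.coeff a ≤ p.coeff b) ∧
      (∀ a b : ℕ, m ≤ a → a ≤ b → p.coeff b ≤ p.coeff a) := by
  have hex : ∃ k, p.coeff (k+1) ≤ p.coeff k := by
    refine ⟨d+1, ?_⟩
    rw [h.2.2.1 (d+2) (by omega)]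
    exact h.2.1
  set m := Nat.find hex with hm
  have hup : ∀ k, k < m → p.coeff k < p.coeff (k+1) := by
    intro k hk
    have := Nat.find_min hex hk
    linarith [lt_of_not_ge this]
  have hdown : ∀ k, m ≤ k → p.coeff (k+1) ≤ p.coeff k := by
    intro k hk
    induction k, hk using Nat.le_induction with
    | base => exact Nat.find_spec hex
    | succ k hk ih =>
      by_cases h1 : p.coeff (k+1) = 0
      · have : d + 1 < k + 2 := by
          by_contra hc
          exact absurd h1 (h.1 (k+1) (by omega)).ne'
        rw [h.2.2.1 (k+2) this, h1]
      · have p1 : 0 < p.coeff (k+1) := (h.nonneg _).lt_of_ne' h1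
        have lc := h.2.2.2 k
        nlinarith [h.nonneg (k+2), h.nonneg k]
  refine ⟨m, ?_, ?_, ?_⟩
  · by_cases h0 : p.coeff (d+1) = 0
    · have hmd : m ≤ d := Nat.find_min' hex (by rw [h0]; exact (h.1 d le_rfl).le)
      exact hmd.trans (Polynomial.le_natDegree_of_ne_zero (h.1 d le_rfl).ne')
    · have hmd : m ≤ d + 1 := Nat.find_min' hex (by
        rw [h.2.2.1 (d+2) (by omega)]; exact h.2.1)
      exact hmd.trans (Polynomial.le_natDegree_of_ne_zero h0)
  · intro a b hab hbm
    induction b with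
    | zero =>
      have : a = 0 := by omega
      rw [this]
    | succ t ih =>
      rcases Nat.lt_or_ge a (t+1) with hlt | hge
      · exact le_trans (ih (by omega) (by omega)) (hup t (by omega)).le
      · have : a = t + 1 := by omega
        rw [this]
  · intro a b ha hab
    induction b, hab using Nat.le_induction with
    | base => rfl
    | succ b hb ih => exact le_trans (hdown b (ha.trans hb)) ih

/-- The polynomial `(1+t)^{n-j} (1 + j·t + (j-i-1)·t^2)` over `ℝ` has only real
roots (it splits over `ℝ`); consequently its coefficient sequence is unimodal
and log-concave. -/
theorem stmt2 (n i j : ℕ) (hi : 1 ≤ i) (hij : i < j) (hjn : j ≤ n)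
    (p : Polynomial ℝ)
    (hp : p = (1 + Polynomial.X) ^ (n - j) *
      (1 + Polynomial.C (j : ℝ) * Polynomial.X
        + Polynomial.C ((j - i - 1 : ℕ) : ℝ) * Polynomial.X ^ 2)) :
    p.Splits ∧
    (∃ m ≤ p.natDegree,
      (∀ a b : ℕ, a ≤ b → b ≤ m → p.coeff a ≤ p.coeff b) ∧
      (∀ a b : ℕ, m ≤ a → a ≤ b → p.coeff b ≤ p.coeff a)) ∧
    (∀ m : ℕ, 0 < m → p.coeff (m - 1) * p.coeff (m + 1) ≤ p.coeff m ^ 2) := by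
  set c : ℝ := ((j - i - 1 : ℕ) : ℝ) with hc
  set B : Polynomial ℝ := 1 + Polynomial.C (j : ℝ) * Polynomial.X + Polynomial.C c * Polynomial.X ^ 2 with hB
  have hj2 : 2 ≤ j := by omega
  have hcnn : 0 ≤ c := Nat.cast_nonneg _
  have hcj : c ≤ (j : ℝ) := by
    rw [hc]; exact_mod_cast Nat.sub_le _ _ |>.trans (Nat.sub_le _ _)
  have hjr : (2 : ℝ) ≤ (j : ℝ) := by exact_mod_cast hj2
  have hcj2 : c ≤ (j : ℝ) - 2 := by
    have h1 : (j - i - 1 : ℕ) ≤ j - 2 := by omega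
    have h2 := (Nat.cast_le (α := ℝ)).2 h1
    rw [Nat.cast_sub hj2] at h2
    rw [hc]; simpa using h2
  -- coefficients of B
  have hB0 : B.coeff 0 = 1 := by
    simp [hB, Polynomial.coeff_one, Polynomial.coeff_X, Polynomial.coeff_X_pow]
  have hB1 : B.coeff 1 = (j : ℝ) := by
    simp [hB, Polynomial.coeff_one, Polynomial.coeff_X, Polynomial.coeff_X_pow]
  have hB2 : B.coeff 2 = c := by
    simp [hB, Polynomial.coeff_one, Polynomial.coeff_X, Polynomial.coeff_X_pow]
  have hBk : ∀ t : ℕ, B.coeff (t+3) = 0 := by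
    intro t
    simp [hB, Polynomial.coeff_one, Polynomial.coeff_X, Polynomial.coeff_X_pow]
  have hGoodB : GoodSeq B 1 := by
    refine ⟨?_, ?_, ?_, ?_⟩
    · intro k hk
      interval_cases k
      · rw [hB0]; norm_num
      · rw [hB1]; linarith
    · rw [hB2]; exact hcnn
    · intro k hk
      match k, hk with
      | (t+3), _ => exact hBk t
    · intro k
      match k with
      | 0 => rw [hB0, hB1, hB2]; nlinarith
      | 1 => rw [hB1, hBk 0]; nlinarith [sq_nonneg c]
      | (t+2) => rw [hBk t, hBk (t+1)]; nlinarith [sq_nonneg (B.coeff (t+3))]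
  have hGood : GoodSeq p (n - j + 1) := by
    rw [hp]
    generalize (n - j) = N
    induction N with
    | zero => simpa using hGoodB
    | succ N ih =>
      have : (1 + Polynomial.X) ^ (N+1) * B = (1 + Polynomial.X) * ((1 + Polynomial.X) ^ N * B) := by
        ring
      rw [this]
      exact ih.step
  refine ⟨?_, hGood.peak, ?_⟩
  · -- splits
    rw [hp]
    refine Polynomial.Splits.mul (Polynomial.Splits.pow (Polynomial.Splits.of_natDegree_le_one ?_) _) ?_
    · exact le_trans (Polynomial.natDegree_add_le _ _) (by simp)
    · -- the quadratic splits
      rcases eq_or_lt_of_le hcnn with hc0 | hc0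
      · -- c = 0: degree ≤ 1
        refine Polynomial.Splits.of_natDegree_le_one ?_
        rw [hB, ← hc0]
        simp only [Polynomial.C_0, zero_mul, add_zero]
        compute_degree
      · -- c > 0: has a real root
        have hdisc : discrim c (j : ℝ) 1 = Real.sqrt ((j:ℝ)^2 - 4*c) * Real.sqrt ((j:ℝ)^2 - 4*c) := by
          rw [discrim, Real.mul_self_sqrt (by nlinarith : (0:ℝ) ≤ (j:ℝ)^2 - 4*c)]
          ring
        obtain ⟨x, hx⟩ := exists_quadratic_eq_zero hc0.ne' ⟨_, hdisc⟩
        have hroot : (1 + Polynomial.C (j : ℝ) * Polynomial.X + Polynomial.C c * Polynomial.X ^ 2).IsRoot x := by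
          simp [Polynomial.IsRoot, Polynomial.eval_add, Polynomial.eval_mul]
          linarith [hx]
        set q := (1 + Polynomial.C (j : ℝ) * Polynomial.X + Polynomial.C c * Polynomial.X ^ 2) with hq
        have hfac : (Polynomial.X - Polynomial.C x) * (q /ₘ (Polynomial.X - Polynomial.C x)) = q :=
          Polynomial.mul_divByMonic_eq_iff_isRoot.2 hroot
        rw [show B = q from hB, ← hfac]
        refine Polynomial.Splits.mul (Polynomial.Splits.X_sub_C _) (Polynomial.Splits.of_natDegree_le_one ?_)
        have hdq : q.natDegree ≤ 2 := by
          rw [hq]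
          compute_degree
        rw [Polynomial.natDegree_divByMonic _ (Polynomial.monic_X_sub_C x)]
        simp [Polynomial.natDegree_X_sub_C]
        omega
  · intro m hm
    match m, hm with
    | (k+1), _ =>
      have := hGood.2.2.2 k
      simpa using this
end

section
/- Let 1 ≤ i < j ≤ n and let p(t) = (1+t)^{n−j}(1 + j·t + (j−i−1)·t^2), a polynomial of degree D with coefficients h_0,…,h_D. Then p is symmetric (i.e., h_m = h_{D−m} for all 0 ≤ m ≤ D) if and only if j − i − 1 = 1. -/
open MvPolynomial

lemma monic_one_add_X' : ((1 : Polynomial ℕ) + Polynomial.X).Monic := by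
  simpa [add_comm] using Polynomial.monic_X_add_C (1 : ℕ)

lemma nd_one_add_X : ((1 : Polynomial ℕ) + Polynomial.X).natDegree = 1 := by
  rw [add_comm, ← Polynomial.C_1]; exact Polynomial.natDegree_X_add_C 1

lemma rev_one_add_X :
    ((1 : Polynomial ℕ) + Polynomial.X).reverse = 1 + Polynomial.X := by
  rw [Polynomial.reverse, nd_one_add_X, Polynomial.reflect_add, Polynomial.reflect_one,
    Polynomial.reflect_one_X]
  ring

lemma rev_pow (k : ℕ) :
    (((1 : Polynomial ℕ) + Polynomial.X) ^ k).reverse = (1 + Polynomial.X) ^ k := by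
  induction k with
  | zero => rw [pow_zero, Polynomial.reverse]; simp [Polynomial.reflect_one]
  | succ k ih =>
    rw [pow_succ, Polynomial.reverse_mul, ih, rev_one_add_X]
    rw [(monic_one_add_X'.pow k).leadingCoeff, monic_one_add_X'.leadingCoeff]
    norm_num

lemma rev_q (j : ℕ) :
    ((1 : Polynomial ℕ) + Polynomial.C j * Polynomial.X + Polynomial.X ^ 2).reverse
      = 1 + Polynomial.C j * Polynomial.X + Polynomial.X ^ 2 := by
  have h : ((1 : Polynomial ℕ) + Polynomial.C j * Polynomial.X + Polynomial.X ^ 2).natDegree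
      = 2 := by
    compute_degree!
  have hX : Polynomial.reflect 2 (Polynomial.X : Polynomial ℕ) = Polynomial.X := by
    simpa using Polynomial.reflect_monomial 2 1 (R := ℕ)
  rw [Polynomial.reverse, h, Polynomial.reflect_add, Polynomial.reflect_add,
    Polynomial.reflect_one, Polynomial.reflect_C_mul, hX, Polynomial.reflect_monomial]
  norm_num [Polynomial.revAt_le]
  ring

lemma lead_q (j c : ℕ) (hc : c ≠ 0) :
    ((1 : Polynomial ℕ) + Polynomial.C j * Polynomial.X
      + Polynomial.C c * Polynomial.X ^ 2).leadingCoeff = c := by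
  have hq : ((1 : Polynomial ℕ) + Polynomial.C j * Polynomial.X
        + Polynomial.C c * Polynomial.X ^ 2)
      = Polynomial.C c * Polynomial.X ^ 2 + Polynomial.C j * Polynomial.X + Polynomial.C 1 := by
    simp; ring
  rw [hq, Polynomial.leadingCoeff_quadratic hc]

lemma lead_q0 (j : ℕ) (hj : j ≠ 0) :
    ((1 : Polynomial ℕ) + Polynomial.C j * Polynomial.X
      + Polynomial.C 0 * Polynomial.X ^ 2).leadingCoeff = j := by
  have hq : ((1 : Polynomial ℕ) + Polynomial.C j * Polynomial.X
        + Polynomial.C 0 * Polynomial.X ^ 2)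
      = Polynomial.C j * Polynomial.X + Polynomial.C 1 := by
    simp; ring
  rw [hq, Polynomial.leadingCoeff_linear hj]

/-- `p(t) = (1+t)^{n-j}(1 + j·t + (j-i-1)·t^2)` is symmetric (palindromic)
if and only if `j - i - 1 = 1`. -/
theorem stmt3 (n i j : ℕ) (hi : 1 ≤ i) (hij : i < j) (hjn : j ≤ n)
    (p : Polynomial ℕ)
    (hp : p = (1 + Polynomial.X) ^ (n - j) *
      (1 + Polynomial.C j * Polynomial.X + Polynomial.C (j - i - 1) * Polynomial.X ^ 2)) :
    (∀ m : ℕ, m ≤ p.natDegree → p.coeff m = p.coeff (p.natDegree - m)) ↔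
      j - i - 1 = 1 := by
  set k := n - j with hk
  set c := j - i - 1 with hc
  have hj2 : 2 ≤ j := by omega
  constructor
  · intro h
    have h0 := h 0 (Nat.zero_le _)
    rw [Nat.sub_zero] at h0
    have hc0 : p.coeff 0 = 1 := by
      rw [hp, Polynomial.mul_coeff_zero]
      simp [Polynomial.coeff_one_add_X_pow]
    have hlead : p.leadingCoeff =
        (1 + Polynomial.C j * Polynomial.X
          + Polynomial.C c * Polynomial.X ^ 2 : Polynomial ℕ).leadingCoeff := by
      rw [hp, Polynomial.leadingCoeff_mul, (monic_one_add_X'.pow k).leadingCoeff, one_mul]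
    by_contra hne
    rcases Nat.lt_or_ge c 1 with hcase | hcase
    · have hcz : c = 0 := by omega
      rw [hcz, lead_q0 j (by omega)] at hlead
      rw [Polynomial.leadingCoeff] at hlead
      omega
    · rw [lead_q j c (by omega)] at hlead
      rw [Polynomial.leadingCoeff] at hlead
      omega
  · intro hc1
    have hrev : p.reverse = p := by
      rw [hp, hc1, Polynomial.C_1, one_mul, Polynomial.reverse_mul, rev_pow, rev_q]
      rw [(monic_one_add_X'.pow k).leadingCoeff]
      have h1 : (1 + Polynomial.C j * Polynomial.X
          + Polynomial.X ^ 2 : Polynomial ℕ).leadingCoeff = 1 := by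
        have := lead_q j 1 one_ne_zero
        rw [Polynomial.C_1, one_mul] at this
        exact this
      rw [h1]
      norm_num
    intro m hm
    conv_lhs => rw [← hrev]
    rw [Polynomial.coeff_reverse, Polynomial.revAt_le hm]
end

section
/- Let (h_k)_{k∈ℤ} be a finitely supported sequence of nonnegative integers that is mid-heavy with h_k > 0 exactly for 0 ≤ k ≤ D. Then (h_k) is in the class ℋ, i.e., either h_{m−1} ≤ h_{D−m} ≤ h_m for all 1 ≤ m ≤ ⌊D/2⌋, or h_{D−m+1} ≤ h_m ≤ h_{D−m} for all 1 ≤ m ≤ ⌊D/2⌋. -/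
open MvPolynomial

/-- A finitely supported sequence `(a_k)_{k∈ℤ}` (with support `[0, n]`) is mid-heavy
if for all `j < i` with at least one of `i, j` in `[0, n]`: `a j ≤ a i` implies
`a (j-1) ≤ a (i+1)`, and `a j ≥ a i` implies `a (j-1) ≥ a (i+1)`. -/
def MidHeavy (a : ℤ → ℕ) (n : ℤ) : Prop :=
  ∀ i j : ℤ, j < i → ((0 ≤ i ∧ i ≤ n) ∨ (0 ≤ j ∧ j ≤ n)) →
    (a j ≤ a i → a (j - 1) ≤ a (i + 1)) ∧ (a i ≤ a j → a (i + 1) ≤ a (j - 1))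


/-- A mid-heavy finitely supported sequence with support exactly `[0, D]` is in
the class `ℋ`. -/
theorem stmt4 (h : ℤ → ℕ) (D : ℕ)
    (hsupp : ∀ m : ℤ, 0 < h m ↔ 0 ≤ m ∧ m ≤ (D : ℤ))
    (hmh : MidHeavy h D) :
    (∀ m : ℕ, 1 ≤ m → m ≤ D / 2 →
      h ((m : ℤ) - 1) ≤ h ((D : ℤ) - m) ∧ h ((D : ℤ) - m) ≤ h m) ∨
    (∀ m : ℕ, 1 ≤ m → m ≤ D / 2 →
      h ((D : ℤ) - m + 1) ≤ h m ∧ h m ≤ h ((D : ℤ) - m)) := by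
  have hpos : ∀ m : ℤ, 0 ≤ m → m ≤ (D : ℤ) → 0 < h m := fun m h1 h2 => (hsupp m).mpr ⟨h1, h2⟩
  have hzero : ∀ m : ℤ, (m < 0 ∨ (D : ℤ) < m) → h m = 0 := by
    intro m hm
    by_contra hne
    have := (hsupp m).mp (Nat.pos_of_ne_zero hne)
    omega
  -- strict inward propagation (contrapositive of mid-heaviness)
  have key : ∀ i j : ℤ, j < i → ((0 ≤ i ∧ i ≤ (D : ℤ)) ∨ (0 ≤ j ∧ j ≤ (D : ℤ))) →
      (h (j - 1) < h (i + 1) → h j < h i) ∧ (h (i + 1) < h (j - 1) → h i < h j) := by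
    intro i j hji hin
    have hm := hmh i j hji hin
    constructor
    · intro hlt
      by_contra hle
      exact absurd (hm.2 (by omega)) (by omega)
    · intro hlt
      by_contra hle
      exact absurd (hm.1 (by omega)) (by omega)
  have fact1 : ∀ k : ℕ, 2 * k ≤ D → h ((k : ℤ) - 1) < h ((D : ℤ) - k) := by
    intro k
    induction k with
    | zero =>
      intro _
      have h1 : h (-1 : ℤ) = 0 := hzero _ (by omega)
      have h2 : 0 < h ((D : ℤ)) := hpos _ (by omega) (by omega)
      push_cast
      simp only [sub_zero, zero_sub]
      omega
    | succ k ih =>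
      intro hk
      have prev := ih (by omega)
      have step := (key ((D : ℤ) - k - 1) (k : ℤ) (by omega) (Or.inl ⟨by omega, by omega⟩)).1
      rw [show (D : ℤ) - k - 1 + 1 = (D : ℤ) - k by ring] at step
      have hres := step prev
      push_cast
      rw [show (k : ℤ) + 1 - 1 = (k : ℤ) by ring,
        show (D : ℤ) - ((k : ℤ) + 1) = (D : ℤ) - k - 1 by ring]
      exact hres
  have fact2 : ∀ k : ℕ, 2 * k ≤ D → h ((D : ℤ) + 1 - k) < h (k : ℤ) := by
    intro k
    induction k with
    | zero =>
      intro _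
      have h1 : h ((D : ℤ) + 1) = 0 := hzero _ (by omega)
      have h2 : 0 < h (0 : ℤ) := hpos _ (by omega) (by omega)
      push_cast
      simp only [sub_zero]
      omega
    | succ k ih =>
      intro hk
      have prev := ih (by omega)
      have step := (key ((D : ℤ) - k) ((k : ℤ) + 1) (by omega) (Or.inl ⟨by omega, by omega⟩)).2
      rw [show (D : ℤ) - k + 1 = (D : ℤ) + 1 - k by ring,
        show (k : ℤ) + 1 - 1 = (k : ℤ) by ring] at step
      have hres := step prev
      push_cast
      rw [show (D : ℤ) + 1 - ((k : ℤ) + 1) = (D : ℤ) - k by ring]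
      exact hres
  set m0 : ℕ := (D - 1) / 2 with hm0
  rcases le_total (h ((D : ℤ) - m0)) (h (m0 : ℤ)) with hc | hc
  · -- left alternative: h (D - m) ≤ h m propagates outward
    left
    have down : ∀ k : ℕ, k ≤ m0 → h ((D : ℤ) - m0 + k) ≤ h ((m0 : ℤ) - k) := by
      intro k
      induction k with
      | zero =>
        intro _
        simpa using hc
      | succ k ih =>
        intro hk
        have prev := ih (by omega)
        have hm := hmh ((D : ℤ) - m0 + k) ((m0 : ℤ) - k) (by omega)
          (Or.inr ⟨by omega, by omega⟩)
        have hres := hm.2 prev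
        push_cast
        rw [show (m0 : ℤ) - ((k : ℤ) + 1) = (m0 : ℤ) - k - 1 by ring,
          show (D : ℤ) - m0 + ((k : ℤ) + 1) = (D : ℤ) - m0 + k + 1 by ring]
        exact hres
    intro m hm1 hm2
    refine ⟨le_of_lt (fact1 m (by omega)), ?_⟩
    by_cases hmm : m ≤ m0
    · have hd := down (m0 - m) (by omega)
      rw [Nat.cast_sub hmm] at hd
      rw [show (m0 : ℤ) - ((m0 : ℤ) - m) = (m : ℤ) by ring,
        show (D : ℤ) - m0 + ((m0 : ℤ) - m) = (D : ℤ) - m by ring] at hd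
      exact hd
    · have he : (D : ℤ) - m = (m : ℤ) := by omega
      rw [he]
  · -- right alternative: h m ≤ h (D - m) propagates outward
    right
    have down : ∀ k : ℕ, k ≤ m0 → h ((m0 : ℤ) - k) ≤ h ((D : ℤ) - m0 + k) := by
      intro k
      induction k with
      | zero =>
        intro _
        simpa using hc
      | succ k ih =>
        intro hk
        have prev := ih (by omega)
        have hm := hmh ((D : ℤ) - m0 + k) ((m0 : ℤ) - k) (by omega)
          (Or.inr ⟨by omega, by omega⟩)
        have hres := hm.1 prev
        push_cast
        rw [show (m0 : ℤ) - ((k : ℤ) + 1) = (m0 : ℤ) - k - 1 by ring,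
          show (D : ℤ) - m0 + ((k : ℤ) + 1) = (D : ℤ) - m0 + k + 1 by ring]
        exact hres
    intro m hm1 hm2
    constructor
    · have := fact2 m (by omega)
      rw [show (D : ℤ) - m + 1 = (D : ℤ) + 1 - m by ring]
      exact le_of_lt this
    · by_cases hmm : m ≤ m0
      · have hd := down (m0 - m) (by omega)
        rw [Nat.cast_sub hmm] at hd
        rw [show (m0 : ℤ) - ((m0 : ℤ) - m) = (m : ℤ) by ring,
          show (D : ℤ) - m0 + ((m0 : ℤ) - m) = (D : ℤ) - m by ring] at hd
        exact hd
      · have he : (D : ℤ) - m = (m : ℤ) := by omega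
        rw [he]
end

section
/- Let (a_k)_{k∈ℤ} be a finitely supported sequence of nonnegative integers that is mid-heavy with a_k > 0 exactly for 0 ≤ k ≤ n. Then the sequence (b_k)_{k∈ℤ} defined by b_k = a_{k−1} + a_k (the coefficient sequence of (1+t)·p(t), where p is the generating function of (a_k)) is also mid-heavy, with b_k > 0 exactly for 0 ≤ k ≤ n+1. -/
open MvPolynomial

private lemma step1 (a : ℤ → ℕ) (n : ℕ)
    (hsupp : ∀ m : ℤ, 0 < a m ↔ 0 ≤ m ∧ m ≤ (n : ℤ))
    (hmh : MidHeavy a n) (i j : ℤ) (hji : j < i)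
    (H : a (j - 1) + a j ≤ a (i - 1) + a i) : a (j - 1) ≤ a i := by
  by_cases h0 : a (j - 1) = 0
  · omega
  · have hj1 := hsupp (j - 1)
    have hjn : 1 ≤ j ∧ j ≤ (n : ℤ) + 1 := by omega
    rcases eq_or_lt_of_le (by omega : j ≤ i - 1) with he | hlt
    · rw [← he] at H; omega
    · by_cases hjn2 : j ≤ (n : ℤ)
      · have h1 := (hmh (i - 1) j hlt (Or.inr ⟨by omega, hjn2⟩)).1
        have he2 : i - 1 + 1 = i := by ring
        rw [he2] at h1
        omega
      · -- j = n + 1, i ≥ n + 3, so a i = a (i-1) = 0, a j = 0, contradiction with H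
        have hi := hsupp i
        have hi1 := hsupp (i - 1)
        have hj := hsupp j
        omega

private lemma step2 (a : ℤ → ℕ) (n : ℕ)
    (hsupp : ∀ m : ℤ, 0 < a m ↔ 0 ≤ m ∧ m ≤ (n : ℤ))
    (hmh : MidHeavy a n) (i j : ℤ) (hji : j < i)
    (happ : (0 ≤ i ∧ i ≤ (n : ℤ) + 1) ∨ (0 ≤ j ∧ j ≤ (n : ℤ) + 1))
    (h1 : a (j - 1) ≤ a i) : a (j - 2) ≤ a (i + 1) := by
  by_cases h0 : a (j - 2) = 0
  · omega
  · have hj2 := hsupp (j - 2)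
    have hjn : 2 ≤ j ∧ j ≤ (n : ℤ) + 2 := by omega
    have hjn1 : j ≤ (n : ℤ) + 1 := by omega
    have h2 := (hmh i (j - 1) (by omega) (Or.inr ⟨by omega, by omega⟩)).1 h1
    have he : j - 1 - 1 = j - 2 := by ring
    rw [he] at h2
    exact h2

private lemma step1' (a : ℤ → ℕ) (n : ℕ)
    (hsupp : ∀ m : ℤ, 0 < a m ↔ 0 ≤ m ∧ m ≤ (n : ℤ))
    (hmh : MidHeavy a n) (i j : ℤ) (hji : j < i)
    (H : a (i - 1) + a i ≤ a (j - 1) + a j) : a i ≤ a (j - 1) := by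
  by_cases h0 : a i = 0
  · omega
  · have hii := hsupp i
    have hin : 0 ≤ i ∧ i ≤ (n : ℤ) := by omega
    rcases eq_or_lt_of_le (by omega : j ≤ i - 1) with he | hlt
    · rw [← he] at H; omega
    · by_cases hi1 : 1 ≤ i
      · have h1 := (hmh (i - 1) j hlt (Or.inl ⟨by omega, by omega⟩)).2
        have he2 : i - 1 + 1 = i := by ring
        rw [he2] at h1
        omega
      · -- i = 0, j ≤ -2, so a j = a (j-1) = 0, contradiction with H since a 0 > 0
        have hj := hsupp j
        have hj1 := hsupp (j - 1)
        omega

private lemma step2' (a : ℤ → ℕ) (n : ℕ)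
    (hsupp : ∀ m : ℤ, 0 < a m ↔ 0 ≤ m ∧ m ≤ (n : ℤ))
    (hmh : MidHeavy a n) (i j : ℤ) (hji : j < i)
    (happ : (0 ≤ i ∧ i ≤ (n : ℤ) + 1) ∨ (0 ≤ j ∧ j ≤ (n : ℤ) + 1))
    (h1 : a i ≤ a (j - 1)) : a (i + 1) ≤ a (j - 2) := by
  by_cases h0 : a (i + 1) = 0
  · omega
  · have hi1 := hsupp (i + 1)
    have hin : -1 ≤ i ∧ i ≤ (n : ℤ) - 1 := by omega
    have hi0 : 0 ≤ i := by omega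
    have h2 := (hmh i (j - 1) (by omega) (Or.inl ⟨hi0, by omega⟩)).2 h1
    have he : j - 1 - 1 = j - 2 := by ring
    rw [he] at h2
    exact h2

/-- If `(a_k)` is mid-heavy with support exactly `[0, n]`, then the coefficient
sequence `b_k = a_{k-1} + a_k` of `(1+t)·p(t)` is mid-heavy with support
exactly `[0, n+1]`. -/
theorem stmt5 (a : ℤ → ℕ) (n : ℕ)
    (hsupp : ∀ m : ℤ, 0 < a m ↔ 0 ≤ m ∧ m ≤ (n : ℤ))
    (hmh : MidHeavy a n) :
    (∀ m : ℤ, 0 < a (m - 1) + a m ↔ 0 ≤ m ∧ m ≤ (n : ℤ) + 1) ∧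
    MidHeavy (fun m => a (m - 1) + a m) ((n : ℤ) + 1) := by
  constructor
  · intro m
    have h1 := hsupp (m - 1)
    have h2 := hsupp m
    omega
  · intro i j hji happ
    dsimp only
    have e1 : i + 1 - 1 = i := by ring
    have e2 : j - 1 - 1 = j - 2 := by ring
    rw [e1, e2]
    constructor
    · intro H
      have s1 := step1 a n hsupp hmh i j hji H
      have s2 := step2 a n hsupp hmh i j hji happ s1
      omega
    · intro H
      have s1 := step1' a n hsupp hmh i j hji H
      have s2 := step2' a n hsupp hmh i j hji happ s1
      omega
end

section
/- Let 1 ≤ i < j ≤ n and let (h_k)_{k∈ℤ} be the coefficient sequence of the polynomial (1+t)^{n−j}(1 + j·t + (j−i−1)·t^2) (extended by zero outside its support). Then (h_k) is a mid-heavy sequence. -/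
open MvPolynomial

namespace MidHeavyAux

open Polynomial

def Seq (r : Polynomial ℕ) : ℤ → ℕ := fun m => if 0 ≤ m then r.coeff m.toNat else 0

def Good (a : ℤ → ℕ) (d : ℤ) : Prop :=
  (∀ k : ℤ, 0 ≤ k → k ≤ d → 0 < a k) ∧ (∀ k : ℤ, k < 0 → a k = 0) ∧
    (∀ k : ℤ, d < k → a k = 0) ∧ MidHeavy a d

lemma midHeavy_of_inner (a : ℤ → ℕ) (d : ℤ)
    (hpos : ∀ k : ℤ, 0 ≤ k → k ≤ d → 0 < a k)
    (hneg : ∀ k : ℤ, k < 0 → a k = 0)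
    (htop : ∀ k : ℤ, d < k → a k = 0)
    (inner : ∀ I J : ℤ, 0 ≤ J → J < I → I ≤ d →
      (a J ≤ a I → a (J - 1) ≤ a (I + 1)) ∧ (a I ≤ a J → a (I + 1) ≤ a (J - 1))) :
    MidHeavy a d := by
  intro I J hJI hrange
  by_cases hJ : J < 0
  · have hI : 0 ≤ I ∧ I ≤ d := by
      rcases hrange with h | h
      · exact h
      · omega
    constructor
    · intro _; rw [hneg (J - 1) (by omega)]; exact Nat.zero_le _
    · intro h; have := hpos I hI.1 hI.2; rw [hneg J hJ] at h; omega
  · by_cases hI : d < I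
    · have hJd : 0 ≤ J ∧ J ≤ d := by rcases hrange with h | h <;> omega
      constructor
      · intro h; have := hpos J hJd.1 hJd.2; rw [htop I hI] at h; omega
      · intro _; rw [htop (I + 1) (by omega)]; exact Nat.zero_le _
    · exact inner I J (by omega) hJI (by omega)

lemma good_step (a : ℤ → ℕ) (d : ℤ) (hd : 0 ≤ d) (hg : Good a d) :
    Good (fun k => a k + a (k - 1)) (d + 1) := by
  obtain ⟨hpos, hneg, htop, hmh⟩ := hg
  have hmh' : ∀ s t u v : ℤ, t < s → u = s + 1 → v = t - 1 →
      ((0 ≤ s ∧ s ≤ d) ∨ (0 ≤ t ∧ t ≤ d)) →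
      (a t ≤ a s → a v ≤ a u) ∧ (a s ≤ a t → a u ≤ a v) := by
    intro s t u v h1 h2 h3 h4; subst h2; subst h3; exact hmh s t h1 h4
  set b : ℤ → ℕ := fun k => a k + a (k - 1) with hbdef
  have hb' : ∀ k : ℤ, b k = a k + a (k - 1) := fun k => rfl
  have bpos : ∀ k : ℤ, 0 ≤ k → k ≤ d + 1 → 0 < b k := by
    intro k h0 hk; rw [hb']
    by_cases h : k ≤ d
    · have := hpos k h0 h; omega
    · have := hpos (k - 1) (by omega) (by omega); omega
  have bneg : ∀ k : ℤ, k < 0 → b k = 0 := by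
    intro k hk; rw [hb', hneg k hk, hneg (k - 1) (by omega)]
  have btop : ∀ k : ℤ, d + 1 < k → b k = 0 := by
    intro k hk; rw [hb', htop k (by omega), htop (k - 1) (by omega)]
  refine ⟨bpos, bneg, btop, midHeavy_of_inner b (d + 1) bpos bneg btop ?_⟩
  intro I J hJ0 hJI hId
  have e1 : b J = a J + a (J - 1) := rfl
  have e2 : b I = a I + a (I - 1) := rfl
  have e3 : b (J - 1) = a (J - 1) + a (J - 2) := by rw [hb', show J - 1 - 1 = J - 2 by ring]
  have e4 : b (I + 1) = a (I + 1) + a I := by rw [hb', show I + 1 - 1 = I by ring]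
  by_cases hI1 : I = J + 1
  · have e5 : a (I - 1) = a J := by rw [show I - 1 = J by omega]
    by_cases hv : J + 1 ≤ d ∨ 1 ≤ J
    · have hm := hmh' I (J - 1) (I + 1) (J - 2) (by omega) rfl (by ring) (by omega)
      constructor
      · intro h; rw [e1, e2] at h; rw [e3, e4]
        have h1 : a (J - 1) ≤ a I := by omega
        have := hm.1 h1; omega
      · intro h; rw [e1, e2] at h; rw [e3, e4]
        have h1 : a I ≤ a (J - 1) := by omega
        have := hm.2 h1; omega
    · -- J = 0, d = 0, I = 1
      constructor
      · intro _; rw [e3, hneg (J - 1) (by omega), hneg (J - 2) (by omega)]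
        exact Nat.zero_le _
      · intro _; rw [e3, e4, htop (I + 1) (by omega), htop I (by omega)]
        exact Nat.zero_le _
  · -- I ≥ J + 2
    have hP2 := hmh' (I - 1) J I (J - 1) (by omega) (by ring) rfl (by omega)
    constructor
    · intro h; rw [e1, e2] at h; rw [e3, e4]
      by_cases hA : a (J - 1) ≤ a I
      · by_cases hval : 1 ≤ J ∨ I ≤ d
        · have hP1 := hmh' I (J - 1) (I + 1) (J - 2) (by omega) rfl (by ring) (by omega)
          have := hP1.1 hA; omega
        · rw [hneg (J - 1) (by omega), hneg (J - 2) (by omega)]; exact Nat.zero_le _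
      · rcases le_or_gt (a J) (a (I - 1)) with h' | h'
        · exact absurd (hP2.1 h') hA
        · omega
    · intro h; rw [e1, e2] at h; rw [e3, e4]
      by_cases hA : a I ≤ a (J - 1)
      · by_cases hval : 1 ≤ J ∨ I ≤ d
        · have hP1 := hmh' I (J - 1) (I + 1) (J - 2) (by omega) rfl (by ring) (by omega)
          have := hP1.2 hA; omega
        · rw [htop (I + 1) (by omega)]; omega
      · rcases le_or_gt (a (I - 1)) (a J) with h' | h'
        · exact absurd (hP2.2 h') hA
        · omega

lemma seq_one_add_X_mul (r : Polynomial ℕ) (k : ℤ) :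
    Seq ((1 + Polynomial.X) * r) k = Seq r k + Seq r (k - 1) := by
  simp only [Seq]
  rcases lt_trichotomy k 0 with h | h | h
  · rw [if_neg (by omega), if_neg (by omega), if_neg (by omega)]
  · subst h
    rw [if_pos le_rfl, if_pos le_rfl, if_neg (by omega)]
    simp [Polynomial.mul_coeff_zero]
  · rw [if_pos (by omega), if_pos (by omega), if_pos (by omega)]
    have hk : k.toNat = (k - 1).toNat + 1 := by omega
    rw [hk]
    simp [add_mul, Polynomial.coeff_X_mul]

lemma Good_congr {a b : ℤ → ℕ} {d : ℤ} (h : ∀ k, b k = a k) (hg : Good a d) : Good b d := by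
  have hab : b = a := funext h
  rw [hab]; exact hg

lemma good_iter (r : Polynomial ℕ) (hr : Good (Seq r) (r.natDegree : ℤ)) (m : ℕ) :
    Good (Seq ((1 + Polynomial.X) ^ m * r)) ((((1 + Polynomial.X) ^ m * r).natDegree : ℤ)) := by
  have hX0 : (1 + Polynomial.X : Polynomial ℕ) ≠ 0 := by
    intro h
    have h0 : (1 + Polynomial.X : Polynomial ℕ).coeff 0 = 1 := by simp
    rw [h] at h0; simp at h0
  have hXd : (1 + Polynomial.X : Polynomial ℕ).natDegree = 1 := by
    compute_degree!
  have hr0 : r ≠ 0 := by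
    intro h
    have := hr.1 0 le_rfl (Int.natCast_nonneg _)
    rw [h] at this
    simp [Seq] at this
  induction m with
  | zero => simpa using hr
  | succ m ih =>
    have hs0 : (1 + Polynomial.X : Polynomial ℕ) ^ m * r ≠ 0 :=
      mul_ne_zero (pow_ne_zero _ hX0) hr0
    have hs : (1 + Polynomial.X : Polynomial ℕ) ^ (m + 1) * r
        = (1 + Polynomial.X) * ((1 + Polynomial.X) ^ m * r) := by
      rw [pow_succ]; ring
    rw [hs]
    have hnd : ((1 + Polynomial.X) * ((1 + Polynomial.X : Polynomial ℕ) ^ m * r)).natDegree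
        = ((1 + Polynomial.X : Polynomial ℕ) ^ m * r).natDegree + 1 := by
      rw [Polynomial.natDegree_mul hX0 hs0, hXd]; omega
    rw [hnd]
    push_cast
    exact Good_congr (seq_one_add_X_mul _) (good_step _ _ (Int.natCast_nonneg _) ih)

lemma good_base (j c : ℕ) (hj : 2 ≤ j) (hc : c + 2 ≤ j) :
    Good (Seq (1 + Polynomial.C j * Polynomial.X + Polynomial.C c * Polynomial.X ^ 2))
      (((1 + Polynomial.C j * Polynomial.X + Polynomial.C c * Polynomial.X ^ 2).natDegree : ℤ)) := by
  set q : Polynomial ℕ := 1 + Polynomial.C j * Polynomial.X + Polynomial.C c * Polynomial.X ^ 2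
    with hq
  have hq0 : q.coeff 0 = 1 := by simp [hq]
  have hq1 : q.coeff 1 = j := by simp [hq, Polynomial.coeff_one]
  have hq2 : q.coeff 2 = c := by simp [hq, Polynomial.coeff_one]
  have hq3 : ∀ t : ℕ, 3 ≤ t → q.coeff t = 0 := by
    intro t ht
    simp [hq, Polynomial.coeff_one, Polynomial.coeff_X, Polynomial.coeff_X_pow,
      (by omega : ¬ t = 0), (by omega : ¬ t = 1), (by omega : ¬ t = 2), (by omega : ¬ 1 = t)]
    omega
  have sval : ∀ k : ℤ, Seq q k =
      if k = 0 then 1 else if k = 1 then j else if k = 2 then c else 0 := by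
    intro k
    simp only [Seq]
    by_cases h0 : 0 ≤ k
    · rw [if_pos h0]
      have : k = 0 ∨ k = 1 ∨ k = 2 ∨ 3 ≤ k := by omega
      rcases this with h | h | h | h
      · subst h; simpa using hq0
      · subst h; simp [hq1]
      · subst h; simp [hq2]
      · rw [hq3 k.toNat (by omega), if_neg (by omega), if_neg (by omega), if_neg (by omega)]
    · rw [if_neg h0, if_neg (by omega), if_neg (by omega), if_neg (by omega)]
  by_cases hc0 : c = 0
  · have hd : q.natDegree = 1 := by
      have : q = 1 + Polynomial.C j * Polynomial.X := by
        rw [hq, hc0]; simp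
      rw [this]
      compute_degree!
      omega
    rw [hd]
    refine ⟨?_, ?_, ?_, midHeavy_of_inner _ _ ?_ ?_ ?_ ?_⟩ <;>
      first
      | (intro k h1 h2; rw [sval]; split_ifs <;> omega)
      | (intro k h1; rw [sval]; split_ifs <;> omega)
      | (intro I J h1 h2 h3
         have hIJ : I = 1 ∧ J = 0 := by omega
         obtain ⟨hI, hJ⟩ := hIJ; subst hI; subst hJ
         norm_num [sval] <;> omega)
  · have hd : q.natDegree = 2 := by
      rw [hq]
      compute_degree!
    rw [hd]
    refine ⟨?_, ?_, ?_, midHeavy_of_inner _ _ ?_ ?_ ?_ ?_⟩ <;>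
      first
      | (intro k h1 h2; rw [sval]; split_ifs <;> omega)
      | (intro k h1; rw [sval]; split_ifs <;> omega)
      | (intro I J h1 h2 h3
         have hIJ : (I = 1 ∧ J = 0) ∨ (I = 2 ∧ J = 0) ∨ (I = 2 ∧ J = 1) := by omega
         rcases hIJ with ⟨hI, hJ⟩ | ⟨hI, hJ⟩ | ⟨hI, hJ⟩ <;> subst hI <;> subst hJ <;>
           norm_num [sval] <;> omega)

end MidHeavyAux

/-- The coefficient sequence of `(1+t)^{n-j}(1 + j·t + (j-i-1)·t^2)`, extended by
zero outside its support, is a mid-heavy sequence. -/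
theorem stmt6 (n i j : ℕ) (hi : 1 ≤ i) (hij : i < j) (hjn : j ≤ n)
    (p : Polynomial ℕ)
    (hp : p = (1 + Polynomial.X) ^ (n - j) *
      (1 + Polynomial.C j * Polynomial.X + Polynomial.C (j - i - 1) * Polynomial.X ^ 2)) :
    MidHeavy (fun m : ℤ => if 0 ≤ m then p.coeff m.toNat else 0) (p.natDegree : ℤ) := by
  subst hp
  have hbase := MidHeavyAux.good_base j (j - i - 1) (by omega) (by omega)
  exact (MidHeavyAux.good_iter _ hbase (n - j)).2.2.2
end

section
/- Let k be a field, let A, B, P be matrices over k such that the product A·P·B is defined, and let α ∈ k be nonzero. Then the block matrix M = [[A·P, 0], [α·P, P·B]] satisfies rank(M) = rank(P) + rank(A·P·B). -/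
open MvPolynomial

section aux
open Matrix LinearMap
variable {R : Type*} [Field R] {m n m' n' : Type*}
  [Fintype m] [Fintype n] [Fintype m'] [Fintype n']

private lemma aux_range_prodMap {M N M' N' : Type*} [AddCommGroup M] [AddCommGroup N]
    [AddCommGroup M'] [AddCommGroup N'] [Module R M] [Module R N] [Module R M'] [Module R N']
    (f : M →ₗ[R] M') (g : N →ₗ[R] N') :
    LinearMap.range (f.prodMap g) = (LinearMap.range f).prod (LinearMap.range g) := by
  ext ⟨x, y⟩
  simp only [LinearMap.mem_range, Submodule.mem_prod, Prod.ext_iff]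
  constructor
  · rintro ⟨⟨u, v⟩, h1, h2⟩; exact ⟨⟨u, h1⟩, ⟨v, h2⟩⟩
  · rintro ⟨⟨u, h1⟩, ⟨v, h2⟩⟩; exact ⟨(u, v), h1, h2⟩

private def aux_prodEquiv {M N : Type*} [AddCommGroup M] [AddCommGroup N] [Module R M]
    [Module R N] (p : Submodule R M) (q : Submodule R N) : (p.prod q) ≃ₗ[R] p × q where
  toFun x := (⟨x.1.1, x.2.1⟩, ⟨x.1.2, x.2.2⟩)
  invFun x := ⟨(x.1.1, x.2.1), ⟨x.1.2, x.2.2⟩⟩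
  left_inv _ := rfl
  right_inv _ := rfl
  map_add' _ _ := rfl
  map_smul' _ _ := rfl

set_option linter.unusedSectionVars false in
private lemma aux_rank_fromBlocks_diag [DecidableEq n] [DecidableEq n']
    (A : Matrix m n R) (D : Matrix m' n' R) :
    (fromBlocks A 0 0 D).rank = A.rank + D.rank := by
  have key : mulVecLin (fromBlocks A 0 0 D) =
      ((LinearEquiv.sumArrowLequivProdArrow m m' R R).symm.toLinearMap.comp
        ((mulVecLin A).prodMap (mulVecLin D))).comp
        (LinearEquiv.sumArrowLequivProdArrow n n' R R).toLinearMap := by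
    ext x i <;> cases i <;>
      simp [fromBlocks_mulVec, mulVec, dotProduct, Fintype.sum_sum_type,
        LinearEquiv.sumArrowLequivProdArrow]
  rw [Matrix.rank, key, LinearMap.range_comp_of_range_eq_top _ (LinearEquiv.range _),
    LinearMap.range_comp, aux_range_prodMap, LinearEquiv.finrank_map_eq,
    (aux_prodEquiv _ _).finrank_eq, Module.finrank_prod]
  rfl

private lemma aux_rank_submatrix (A : Matrix m n R) (e₁ : m' ≃ m) (e₂ : n' ≃ n) :
    (A.submatrix e₁ e₂).rank = A.rank := by
  rw [Matrix.rank, Matrix.rank, mulVecLin_submatrix, LinearMap.range_comp,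
    LinearMap.range_comp,
    show LinearMap.funLeft R R e₂.symm = LinearEquiv.funCongrLeft R R e₂.symm from rfl,
    LinearEquiv.range, Submodule.map_top,
    show LinearMap.funLeft R R (e₁ : m' → m) = LinearEquiv.funCongrLeft R R e₁ from rfl,
    LinearEquiv.finrank_map_eq]

private lemma aux_rank_smul [DecidableEq m] (x : R) (hx : x ≠ 0) (A : Matrix m n R) :
    (x • A).rank = A.rank := by
  have h : x • A = (x • (1 : Matrix m m R)) * A := by rw [Matrix.smul_mul, Matrix.one_mul]
  rw [h, Matrix.rank_mul_eq_right_of_isUnit_det]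
  simp [Matrix.det_smul, isUnit_iff_ne_zero, hx]

end aux

/-- For matrices `A, P, B` over a field with `A·P·B` defined and `α ≠ 0`,
the block matrix `[[A·P, 0], [α·P, P·B]]` has rank `rank P + rank (A·P·B)`. -/
theorem stmt10 (k : Type*) [Field k] {a b c d : Type*}
    [Fintype a] [Fintype b] [Fintype c] [Fintype d]
    [DecidableEq a] [DecidableEq b] [DecidableEq c] [DecidableEq d]
    (A : Matrix a b k) (P : Matrix b c k) (B : Matrix c d k)
    (α : k) (hα : α ≠ 0) :
    (Matrix.fromBlocks (A * P) 0 (α • P) (P * B)).rank =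
      P.rank + (A * P * B).rank := by
  classical
  set M := Matrix.fromBlocks (A * P) 0 (α • P) (P * B) with hM
  set L := Matrix.fromBlocks (1 : Matrix a a k) ((-α⁻¹) • A) 0 (1 : Matrix b b k) with hL
  set Rm := Matrix.fromBlocks (1 : Matrix c c k) ((-α⁻¹) • B) 0 (1 : Matrix d d k) with hRm
  have hLdet : IsUnit L.det := by
    rw [hL, Matrix.det_fromBlocks_zero₂₁]; simp
  have hRdet : IsUnit Rm.det := by
    rw [hRm, Matrix.det_fromBlocks_zero₂₁]; simp
  have key : L * M * Rm =
      Matrix.fromBlocks 0 ((-α⁻¹) • (A * P * B)) (α • P) 0 := by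
    rw [hL, hM, hRm, Matrix.fromBlocks_multiply, Matrix.fromBlocks_multiply]
    simp [Matrix.smul_mul, Matrix.mul_smul, smul_smul, inv_mul_cancel₀ hα,
      mul_inv_cancel₀ hα, Matrix.mul_assoc]
  have h1 : M.rank = (L * M * Rm).rank := by
    rw [Matrix.rank_mul_eq_left_of_isUnit_det Rm (L * M) hRdet,
      Matrix.rank_mul_eq_right_of_isUnit_det L M hLdet]
  rw [h1, key]
  have h2 : (Matrix.fromBlocks (0 : Matrix a c k) ((-α⁻¹) • (A * P * B)) (α • P) 0).rank
      = (Matrix.fromBlocks (α • P) (0 : Matrix b d k) 0 ((-α⁻¹) • (A * P * B))).rank := by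
    rw [← aux_rank_submatrix
      (Matrix.fromBlocks (0 : Matrix a c k) ((-α⁻¹) • (A * P * B)) (α • P) 0)
      (Equiv.sumComm b a) (Equiv.refl _)]
    congr 1
    ext i j
    cases i <;> cases j <;> rfl
  rw [h2, aux_rank_fromBlocks_diag, aux_rank_smul α hα,
    aux_rank_smul (-α⁻¹) (by simp [hα]) (A * P * B)]
end

section
/- Let k be a field of characteristic zero, R = k[x_1, x_2, x_3], d ≥ 3 an integer, and I = (x_1, x_2)^d + (x_3^d). Then A = R/I does not satisfy the strong Lefschetz property: for ℓ = x_1 + x_2 + x_3, the multiplication map ·ℓ^3 : A_{d−2} → A_{d+1} is not injective even though dim_k A_{d+1} ≥ dim_k A_{d−2}. -/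
open MvPolynomial

/-- `ℓ` is a strong Lefschetz element for `R/I`: multiplication by every power of `ℓ`
has full rank (is injective or surjective) between any two graded pieces. -/
def IsSLElement {n : ℕ} (k : Type*) [Field k] (I : Ideal (MvPolynomial (Fin n) k))
    (ℓ : MvPolynomial (Fin n) k) : Prop :=
  ∀ t m : ℕ,
    (∀ x ∈ quotPiece k I m, Ideal.Quotient.mk I (ℓ ^ t) * x = 0 → x = 0) ∨
    (quotPiece k I (m + t) ≤
      (quotPiece k I m).map (LinearMap.mulLeft k (Ideal.Quotient.mk I (ℓ ^ t))))

/-- `R/I` has the strong Lefschetz property. -/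
def StrongLefschetz {n : ℕ} (k : Type*) [Field k]
    (I : Ideal (MvPolynomial (Fin n) k)) : Prop :=
  ∃ ℓ ∈ MvPolynomial.homogeneousSubmodule (Fin n) k 1, IsSLElement k I ℓ

/-! ### Auxiliary material -/

noncomputable section SLPAux

variable (k : Type*) [Field k]

/-- Ideal of polynomials all of whose monomials have `wt`-weighted degree at least `e`. -/
def wtIdeal (wt : Fin 3 → ℕ) (e : ℕ) : Ideal (MvPolynomial (Fin 3) k) where
  carrier := {g | ∀ μ : Fin 3 →₀ ℕ, coeff μ g ≠ 0 →
    e ≤ wt 0 * μ 0 + wt 1 * μ 1 + wt 2 * μ 2}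
  zero_mem' := by intro μ h; simp at h
  add_mem' := by
    intro a b ha hb μ h
    rw [coeff_add] at h
    by_cases h1 : coeff μ a ≠ 0
    · exact ha _ h1
    · push_neg at h1
      rw [h1, zero_add] at h
      exact hb _ h
  smul_mem' := by
    intro c g hg μ h
    rw [smul_eq_mul, coeff_mul] at h
    obtain ⟨p, hp, hne⟩ := Finset.exists_ne_zero_of_sum_ne_zero h
    have h2 : coeff p.2 g ≠ 0 := right_ne_zero_of_mul hne
    have h3 := hg _ h2
    have hpq : p.1 + p.2 = μ := Finset.HasAntidiagonal.mem_antidiagonal.mp hp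
    have e0 : p.2 0 ≤ μ 0 := by rw [← hpq]; simp
    have e1 : p.2 1 ≤ μ 1 := by rw [← hpq]; simp
    have e2 : p.2 2 ≤ μ 2 := by rw [← hpq]; simp
    calc e ≤ wt 0 * p.2 0 + wt 1 * p.2 1 + wt 2 * p.2 2 := h3
    _ ≤ wt 0 * μ 0 + wt 1 * μ 1 + wt 2 * μ 2 := by gcongr

variable {k}

lemma X_mem_wtIdeal (wt : Fin 3 → ℕ) (i : Fin 3) :
    (X i : MvPolynomial (Fin 3) k) ∈ wtIdeal k wt (wt i) := by
  intro μ h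
  rw [coeff_X'] at h
  have : Finsupp.single i 1 = μ := by by_contra hc; simp [hc] at h
  subst this
  fin_cases i <;> simp [Finsupp.single_apply]

lemma wtIdeal_mul_le (wt : Fin 3 → ℕ) (e₁ e₂ : ℕ) :
    wtIdeal k wt e₁ * wtIdeal k wt e₂ ≤ wtIdeal k wt (e₁ + e₂) := by
  rw [Ideal.mul_le]
  intro r hr s hs μ h
  rw [coeff_mul] at h
  obtain ⟨p, hp, hne⟩ := Finset.exists_ne_zero_of_sum_ne_zero h
  have h1 := hr _ (left_ne_zero_of_mul hne)
  have h2 := hs _ (right_ne_zero_of_mul hne)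
  have hpq : p.1 + p.2 = μ := Finset.HasAntidiagonal.mem_antidiagonal.mp hp
  have h3 : ∀ i : Fin 3, μ i = p.1 i + p.2 i := by intro i; rw [← hpq]; simp
  rw [h3 0, h3 1, h3 2]
  calc e₁ + e₂ ≤ (wt 0 * p.1 0 + wt 1 * p.1 1 + wt 2 * p.1 2)
      + (wt 0 * p.2 0 + wt 1 * p.2 1 + wt 2 * p.2 2) := add_le_add h1 h2
  _ = _ := by ring

lemma wtIdeal_pow_le (wt : Fin 3 → ℕ) (e n : ℕ) :
    (wtIdeal k wt e) ^ n ≤ wtIdeal k wt (n * e) := by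
  induction n with
  | zero => intro g _; intro μ _; simp
  | succ n ih =>
    rw [pow_succ]
    calc (wtIdeal k wt e) ^ n * wtIdeal k wt e ≤ wtIdeal k wt (n * e) * wtIdeal k wt e :=
      Ideal.mul_mono_left ih
    _ ≤ wtIdeal k wt (n * e + e) := wtIdeal_mul_le wt _ _
    _ = wtIdeal k wt ((n + 1) * e) := by ring_nf

/-- The key coefficient-vanishing lemma for elements of `I`. -/
lemma coeff_eq_zero_of_mem {d : ℕ}
    {I : Ideal (MvPolynomial (Fin 3) k)}
    (hI : I = (Ideal.span {X 0, X 1}) ^ d + Ideal.span {(X 2 : MvPolynomial (Fin 3) k) ^ d})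
    {g : MvPolynomial (Fin 3) k} (hg : g ∈ I) (μ : Fin 3 →₀ ℕ)
    (h01 : μ 0 + μ 1 < d) (h2 : μ 2 < d) : coeff μ g = 0 := by
  subst hI
  rw [Ideal.add_eq_sup, Submodule.mem_sup] at hg
  obtain ⟨g₁, hg₁, g₂, hg₂, rfl⟩ := hg
  have hspan : Ideal.span ({X 0, X 1} : Set (MvPolynomial (Fin 3) k)) ≤ wtIdeal k ![1,1,0] 1 := by
    rw [Ideal.span_le]
    rintro g hg
    simp only [Set.mem_insert_iff, Set.mem_singleton_iff] at hg
    rcases hg with rfl | rfl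
    · simpa using X_mem_wtIdeal (k := k) ![1,1,0] 0
    · simpa using X_mem_wtIdeal (k := k) ![1,1,0] 1
  have m1 : g₁ ∈ wtIdeal k ![1,1,0] (d * 1) :=
    wtIdeal_pow_le ![1,1,0] 1 d (Ideal.pow_right_mono hspan d hg₁)
  have hX2 : (X 2 : MvPolynomial (Fin 3) k) ^ d ∈ wtIdeal k ![0,0,1] (d * 1) := by
    refine wtIdeal_pow_le ![0,0,1] 1 d (Ideal.pow_mem_pow ?_ d)
    simpa using X_mem_wtIdeal (k := k) ![0,0,1] 2
  have m2 : g₂ ∈ wtIdeal k ![0,0,1] (d * 1) := by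
    rw [Ideal.mem_span_singleton] at hg₂
    obtain ⟨r, rfl⟩ := hg₂
    exact Ideal.mul_mem_right r _ hX2
  rw [coeff_add]
  have z1 : coeff μ g₁ = 0 := by
    by_contra hc
    have := m1 μ hc
    simp only [Matrix.cons_val_zero, Matrix.cons_val_one, Matrix.head_cons, Matrix.cons_val_two,
      Matrix.tail_cons] at this
    omega
  have z2 : coeff μ g₂ = 0 := by
    by_contra hc
    have := m2 μ hc
    simp only [Matrix.cons_val_zero, Matrix.cons_val_one, Matrix.head_cons, Matrix.cons_val_two,
      Matrix.tail_cons] at this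
    omega
  rw [z1, z2, add_zero]

/-! #### the explicit kernel element -/

/-- the coefficient sequence `(-1)^j (j+1)(d-1-j)`. -/
def slpSeq (d : ℕ) (j : ℕ) : ℤ := (-1) ^ j * (j + 1) * ((d - 1 - j : ℕ) : ℤ)

def slpShift (a : ℕ → ℤ) : ℕ → ℤ
  | 0 => a 0
  | (p + 1) => a (p + 1) + a p

@[simp] lemma slpShift_zero (a : ℕ → ℤ) : slpShift a 0 = a 0 := rfl
@[simp] lemma slpShift_succ (a : ℕ → ℤ) (p : ℕ) : slpShift a (p + 1) = a (p + 1) + a p := rfl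

def slpPrev (a : ℕ → ℤ) : ℕ → ℤ
  | 0 => 0
  | (p + 1) => a p

@[simp] lemma slpPrev_zero (a : ℕ → ℤ) : slpPrev a 0 = 0 := rfl
@[simp] lemma slpPrev_succ (a : ℕ → ℤ) (p : ℕ) : slpPrev a (p + 1) = a p := rfl

lemma slpShift_eq (a : ℕ → ℤ) (p : ℕ) : slpShift a p = a p + slpPrev a p := by
  cases p <;> simp

section Identity

variable {A : Type*} [CommRing A]

lemma slp_step (u w : A) (a : ℕ → ℤ) (n : ℕ) (h : ∀ j, n < j → a j = 0) :
    (u + w) * (∑ j ∈ Finset.range (n + 1), a j • (u ^ j * w ^ (n - j))) =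
    ∑ p ∈ Finset.range (n + 2), slpShift a p • (u ^ p * w ^ (n + 1 - p)) := by
  have sum1 : w * (∑ j ∈ Finset.range (n + 1), a j • (u ^ j * w ^ (n - j))) =
      ∑ p ∈ Finset.range (n + 2), a p • (u ^ p * w ^ (n + 1 - p)) := by
    conv_rhs => rw [Finset.sum_range_succ]
    rw [h (n+1) (by omega), zero_smul, add_zero, Finset.mul_sum]
    refine Finset.sum_congr rfl ?_
    intro j hj
    rw [Finset.mem_range] at hj
    have hnj : n + 1 - j = (n - j) + 1 := by omega
    rw [hnj, mul_smul_comm, pow_succ]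
    congr 1
    ring
  have sum2 : u * (∑ j ∈ Finset.range (n + 1), a j • (u ^ j * w ^ (n - j))) =
      ∑ p ∈ Finset.range (n + 2), slpPrev a p • (u ^ p * w ^ (n + 1 - p)) := by
    conv_rhs => rw [Finset.sum_range_succ']
    rw [Finset.mul_sum]
    simp only [slpPrev_succ, slpPrev_zero, zero_smul, add_zero]
    refine Finset.sum_congr rfl ?_
    intro j hj
    have hnj : n + 1 - (j + 1) = n - j := by omega
    rw [hnj, mul_smul_comm, pow_succ]
    congr 1
    ring
  calc (u + w) * (∑ j ∈ Finset.range (n + 1), a j • (u ^ j * w ^ (n - j)))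
      = u * (∑ j ∈ Finset.range (n + 1), a j • (u ^ j * w ^ (n - j)))
        + w * (∑ j ∈ Finset.range (n + 1), a j • (u ^ j * w ^ (n - j))) := by ring
    _ = ∑ p ∈ Finset.range (n + 2), (a p + slpPrev a p) • (u ^ p * w ^ (n + 1 - p)) := by
        rw [sum1, sum2]
        rw [← Finset.sum_add_distrib]
        refine Finset.sum_congr rfl fun p _ => ?_
        rw [add_smul]
        ring
    _ = _ := by
        refine Finset.sum_congr rfl fun p _ => ?_
        rw [slpShift_eq]

/-- The main identity: `(u+w)^3 * F` is a combination of `w^d` and `u^d`. -/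
lemma slp_key_identity (d : ℕ) (hd : 3 ≤ d) (u w : A) :
    ∃ c₁ c₂ : A, (u + w) ^ 3 *
      (∑ j ∈ Finset.range (d - 1), slpSeq d j • (u ^ j * w ^ (d - 2 - j))) =
      c₁ * w ^ d + c₂ * u ^ d := by
  obtain ⟨e, rfl⟩ : ∃ e, d = e + 3 := ⟨d - 3, by omega⟩
  set a₁ := slpShift (slpSeq (e + 3)) with ha₁
  set a₂ := slpShift a₁ with ha₂
  set a₃ := slpShift a₂ with ha₃
  have hs : ∀ j, e + 1 < j → slpSeq (e + 3) j = 0 := by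
    intro j hj
    simp only [slpSeq]
    have : e + 3 - 1 - j = 0 := by omega
    rw [this]
    simp
  have h1 : ∀ j, e + 2 < j → a₁ j = 0 := by
    intro j hj
    obtain ⟨i, rfl⟩ : ∃ i, j = i + 1 := ⟨j - 1, by omega⟩
    rw [ha₁, slpShift_succ, hs _ (by omega), hs _ (by omega), add_zero]
  have h2 : ∀ j, e + 3 < j → a₂ j = 0 := by
    intro j hj
    obtain ⟨i, rfl⟩ : ∃ i, j = i + 1 := ⟨j - 1, by omega⟩
    rw [ha₂, slpShift_succ, h1 _ (by omega), h1 _ (by omega), add_zero]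
  have expand : (u + w) ^ 3 *
      (∑ j ∈ Finset.range (e + 2), slpSeq (e + 3) j • (u ^ j * w ^ (e + 1 - j))) =
      ∑ p ∈ Finset.range (e + 5), a₃ p • (u ^ p * w ^ (e + 4 - p)) := by
    have e1 := slp_step u w (slpSeq (e + 3)) (e + 1) hs
    have e2 := slp_step u w a₁ (e + 2) h1
    have e3 := slp_step u w a₂ (e + 3) h2
    calc (u + w) ^ 3 * (∑ j ∈ Finset.range (e + 2), slpSeq (e + 3) j • (u ^ j * w ^ (e + 1 - j)))
        = (u + w) * ((u + w) * ((u + w) *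
            (∑ j ∈ Finset.range (e + 2), slpSeq (e + 3) j • (u ^ j * w ^ (e + 1 - j))))) := by ring
      _ = ∑ p ∈ Finset.range (e + 5), a₃ p • (u ^ p * w ^ (e + 4 - p)) := by
          rw [e1, e2, e3]
  have hval : ∀ m, m ≤ e + 2 → slpSeq (e + 3) m = (-1) ^ m * (m + 1) * ((e : ℤ) + 2 - m) := by
    intro m hm
    simp only [slpSeq]
    have : ((e + 3 - 1 - m : ℕ) : ℤ) = (e : ℤ) + 2 - m := by
      push_cast [Nat.cast_sub (by omega : m ≤ e + 3 - 1)]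
      omega
    rw [this]
  have hmid : ∀ i, i ≤ e → a₃ (i + 2) = 0 := by
    intro i hi
    match i with
    | 0 =>
      show a₃ 2 = 0
      rw [ha₃, ha₂, ha₁]
      show (slpSeq (e+3) 2 + slpSeq (e+3) 1 + (slpSeq (e+3) 1 + slpSeq (e+3) 0))
          + ((slpSeq (e+3) 1 + slpSeq (e+3) 0) + slpSeq (e+3) 0) = 0
      rw [hval 2 (by omega), hval 1 (by omega), hval 0 (by omega)]
      ring
    | (j + 1) =>
      show a₃ (j + 3) = 0
      rw [ha₃, ha₂, ha₁]
      show (slpSeq (e+3) (j+3) + slpSeq (e+3) (j+2) + (slpSeq (e+3) (j+2) + slpSeq (e+3) (j+1)))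
          + ((slpSeq (e+3) (j+2) + slpSeq (e+3) (j+1)) + (slpSeq (e+3) (j+1) + slpSeq (e+3) j)) = 0
      rw [hval (j+3) (by omega), hval (j+2) (by omega), hval (j+1) (by omega),
        hval j (by omega)]
      push_cast
      rw [show (-1 : ℤ) ^ (j+3) = (-1)^j * (-1)^3 from by rw [← pow_add],
        show (-1 : ℤ) ^ (j+2) = (-1)^j * (-1)^2 from by rw [← pow_add],
        show (-1 : ℤ) ^ (j+1) = (-1)^j * (-1)^1 from by rw [← pow_add]]
      ring
  have collapse : ∑ p ∈ Finset.range (e + 5), a₃ p • (u ^ p * w ^ (e + 4 - p)) =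
      a₃ 0 • (u ^ 0 * w ^ (e + 4)) + a₃ 1 • (u ^ 1 * w ^ (e + 3))
      + a₃ (e + 3) • (u ^ (e + 3) * w ^ 1) + a₃ (e + 4) • (u ^ (e + 4) * w ^ 0) := by
    rw [Finset.sum_range_succ, Finset.sum_range_succ]
    have hmain : ∑ p ∈ Finset.range (e + 3), a₃ p • (u ^ p * w ^ (e + 4 - p)) =
        a₃ 0 • (u ^ 0 * w ^ (e + 4)) + a₃ 1 • (u ^ 1 * w ^ (e + 3)) := by
      rw [Finset.sum_range_succ', Finset.sum_range_succ']
      have z : ∀ i ∈ Finset.range (e + 1),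
          a₃ (i + 1 + 1) • (u ^ (i + 1 + 1) * w ^ (e + 4 - (i + 1 + 1))) = 0 := by
        intro i hi
        rw [Finset.mem_range] at hi
        rw [hmid i (by omega), zero_smul]
      rw [Finset.sum_eq_zero z]
      norm_num
      ring
    rw [hmain]
    have he1 : e + 4 - (e + 3) = 1 := by omega
    have he2 : e + 4 - (e + 4) = 0 := by omega
    rw [he1, he2]
  refine ⟨a₃ 0 • w + a₃ 1 • u, a₃ (e+3) • w + a₃ (e+4) • u, ?_⟩
  have hr1 : e + 3 - 1 = e + 2 := by omega
  have hr2 : ∀ j, e + 3 - 2 - j = e + 1 - j := by intro j; omega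
  simp only [hr1, hr2]
  rw [expand, collapse]
  simp only [zsmul_eq_mul, pow_zero, pow_one, mul_one, one_mul]
  rw [show e + 4 = (e + 3) + 1 from rfl, pow_succ, pow_succ]
  ring

end Identity

/-- The kernel element. -/
def Fpoly (u w : MvPolynomial (Fin 3) k) (d : ℕ) : MvPolynomial (Fin 3) k :=
  ∑ j ∈ Finset.range (d - 1), slpSeq d j • (u ^ j * w ^ (d - 2 - j))

lemma Fpoly_isHomogeneous {u w : MvPolynomial (Fin 3) k} (hu : u.IsHomogeneous 1)
    (hw : w.IsHomogeneous 1) (d : ℕ) (hd : 3 ≤ d) : (Fpoly u w d).IsHomogeneous (d - 2) := by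
  rw [← mem_homogeneousSubmodule]
  apply Submodule.sum_mem
  intro j hj
  rw [Finset.mem_range] at hj
  apply zsmul_mem
  rw [mem_homogeneousSubmodule]
  have h3 := (hu.pow j).mul (hw.pow (d - 2 - j))
  rwa [show 1 * j + 1 * (d - 2 - j) = d - 2 by omega] at h3

lemma coeff_Fpoly (d : ℕ) (hd : 3 ≤ d) (a b c : k)
    (i i' : Fin 3) (hne : i ≠ i') (hi2 : i ≠ 2)
    (wt : Fin 3 → ℕ) (hwt : ∀ μ : Fin 3 →₀ ℕ, wt 0 * μ 0 + wt 1 * μ 1 + wt 2 * μ 2 = μ i')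
    (hwti : wt i' = 1) :
    coeff (Finsupp.single i (d - 2)) (Fpoly (C a * X i + C b * X i') (C c * X 2) d)
      = ((slpSeq d (d - 2) : ℤ) : k) * a ^ (d - 2) := by
  have hμ2 : (Finsupp.single i (d - 2)) 2 = 0 := by
    rw [Finsupp.single_apply, if_neg hi2]
  have hμi' : (Finsupp.single i (d - 2)) i' = 0 := by
    rw [Finsupp.single_apply, if_neg hne]
  unfold Fpoly
  rw [show d - 1 = (d - 2) + 1 by omega, Finset.sum_range_succ, coeff_add, coeff_sum]
  have hz : ∀ j ∈ Finset.range (d - 2), coeff (Finsupp.single i (d - 2))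
      (slpSeq d j • ((C a * X i + C b * X i') ^ j * (C c * X 2) ^ (d - 2 - j))) = 0 := by
    intro j hj
    rw [Finset.mem_range] at hj
    rw [coeff_smul]
    have hmem : (C a * X i + C b * X i') ^ j * (C c * X 2) ^ (d - 2 - j)
        ∈ wtIdeal k ![0,0,1] ((d - 2 - j) * 1) := by
      apply Ideal.mul_mem_left
      apply wtIdeal_pow_le ![0,0,1] 1 (d - 2 - j)
      refine Ideal.pow_mem_pow ?_ _
      exact Ideal.mul_mem_left _ _ (by simpa using X_mem_wtIdeal (k := k) ![0,0,1] 2)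
    have hc0 : coeff (Finsupp.single i (d - 2))
        ((C a * X i + C b * X i') ^ j * (C c * X 2) ^ (d - 2 - j)) = 0 := by
      by_contra hcon
      have hw2 := hmem _ hcon
      simp only [Matrix.cons_val_zero, Matrix.cons_val_one, Matrix.head_cons,
        Matrix.cons_val_two, Matrix.tail_cons, zero_mul, one_mul, zero_add, hμ2] at hw2
      omega
    rw [hc0, smul_zero]
  rw [Finset.sum_eq_zero hz, zero_add, Nat.sub_self, pow_zero, mul_one, coeff_smul]
  have hXi' : (X i' : MvPolynomial (Fin 3) k) ∈ wtIdeal k wt 1 := by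
    have := X_mem_wtIdeal (k := k) wt i'
    rwa [hwti] at this
  have hu : coeff (Finsupp.single i (d - 2)) ((C a * X i + C b * X i') ^ (d - 2))
      = a ^ (d - 2) := by
    rw [add_pow, coeff_sum, Finset.sum_range_succ]
    have hz2 : ∀ s ∈ Finset.range (d - 2), coeff (Finsupp.single i (d - 2))
        ((C a * X i) ^ s * (C b * X i') ^ (d - 2 - s) * ((d - 2).choose s : MvPolynomial (Fin 3) k)) = 0 := by
      intro s hs
      rw [Finset.mem_range] at hs
      have hmem : (C a * X i) ^ s * (C b * X i') ^ (d - 2 - s) *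
          ((d - 2).choose s : MvPolynomial (Fin 3) k) ∈ wtIdeal k wt ((d - 2 - s) * 1) := by
        apply Ideal.mul_mem_right
        apply Ideal.mul_mem_left
        apply wtIdeal_pow_le wt 1 (d - 2 - s)
        exact Ideal.pow_mem_pow (Ideal.mul_mem_left _ _ hXi') _
      by_contra hcon
      have hw2 := hmem _ hcon
      rw [hwt, hμi'] at hw2
      omega
    rw [Finset.sum_eq_zero hz2, zero_add, Nat.sub_self, pow_zero, mul_one,
      Nat.choose_self, Nat.cast_one, mul_one, mul_pow, ← C_pow, coeff_C_mul, coeff_X_pow]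
    simp
  rw [hu, zsmul_eq_mul]

lemma slpSeq_top_ne_zero (d : ℕ) (hd : 3 ≤ d) : slpSeq d (d - 2) ≠ 0 := by
  unfold slpSeq
  rw [show d - 1 - (d - 2) = 1 by omega]
  push_cast
  intro h
  rcases mul_eq_zero.mp h with h | h
  · rcases mul_eq_zero.mp h with h | h
    · exact pow_ne_zero _ (by norm_num : (-1 : ℤ) ≠ 0) h
    · have : (0 : ℤ) < (d - 2 : ℕ) + 1 := by positivity
      omega
  · norm_num at h

/-! #### counting monomials -/

def expv (i j m : ℕ) : Fin 3 →₀ ℕ :=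
  Finsupp.single 0 i + Finsupp.single 1 j + Finsupp.single 2 m

lemma expv_apply_zero (i j m : ℕ) : expv i j m 0 = i := by
  simp [expv, Finsupp.single_apply]

lemma expv_apply_one (i j m : ℕ) : expv i j m 1 = j := by
  simp [expv, Finsupp.single_apply]

lemma expv_apply_two (i j m : ℕ) : expv i j m 2 = m := by
  simp [expv, Finsupp.single_apply]

lemma degree_eq_sum3 (μ : Fin 3 →₀ ℕ) : μ.degree = μ 0 + μ 1 + μ 2 := by
  change ∑ i ∈ μ.support, μ i = _
  rw [Finset.sum_subset (Finset.subset_univ μ.support)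
    (by intro x _ hx; exact Finsupp.notMem_support_iff.mp hx)]
  rw [Fin.sum_univ_three]

lemma eq_expv (μ : Fin 3 →₀ ℕ) : μ = expv (μ 0) (μ 1) (μ 2) := by
  ext t
  fin_cases t
  · exact (expv_apply_zero (μ 0) (μ 1) (μ 2)).symm
  · exact (expv_apply_one (μ 0) (μ 1) (μ 2)).symm
  · exact (expv_apply_two (μ 0) (μ 1) (μ 2)).symm

lemma degree_expv (i j m : ℕ) : (expv i j m).degree = i + j + m := by
  rw [degree_eq_sum3, expv_apply_zero, expv_apply_one, expv_apply_two]

lemma homogeneousSubmodule_fd (m : ℕ) :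
    FiniteDimensional k (homogeneousSubmodule (Fin 3) k m) := by
  have hle : homogeneousSubmodule (Fin 3) k m ≤ restrictTotalDegree (Fin 3) k m := by
    intro p hp
    rw [mem_restrictTotalDegree]
    exact ((mem_homogeneousSubmodule _ _).mp hp).totalDegree_le
  exact Submodule.finiteDimensional_of_le hle

lemma quotPiece_fd (I : Ideal (MvPolynomial (Fin 3) k)) (m : ℕ) :
    FiniteDimensional k (quotPiece k I m) := by
  haveI := homogeneousSubmodule_fd (k := k) m
  unfold quotPiece
  infer_instance

lemma finrank_quotPiece_le (I : Ideal (MvPolynomial (Fin 3) k)) (m : ℕ) :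
    Module.finrank k (quotPiece k I m) ≤
      (((Finset.range (m+1)) ×ˢ (Finset.range (m+1))).filter (fun p => p.1 + p.2 ≤ m)).card := by
  classical
  set S := ((Finset.range (m+1)) ×ˢ (Finset.range (m+1))).filter (fun p => p.1 + p.2 ≤ m) with hS
  set f : ℕ × ℕ → (MvPolynomial (Fin 3) k ⧸ I) :=
    fun p => Ideal.Quotient.mk I (monomial (expv p.1 p.2 (m - p.1 - p.2)) 1) with hf
  have hspan : quotPiece k I m ≤ Submodule.span k ↑(S.image f) := by
    rintro x ⟨p, hp, rfl⟩
    have hcalc : (Ideal.Quotient.mkₐ k I).toLinearMap p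
        = ∑ v ∈ p.support, coeff v p • Ideal.Quotient.mk I (monomial v 1) := by
      conv_lhs => rw [as_sum p]
      rw [map_sum]
      refine Finset.sum_congr rfl fun v hv => ?_
      rw [show monomial v (coeff v p) = coeff v p • monomial v 1 by
        rw [smul_monomial, smul_eq_mul, mul_one]]
      rw [map_smul]
      rfl
    rw [hcalc]
    apply Submodule.sum_mem
    intro v hv
    apply Submodule.smul_mem
    apply Submodule.subset_span
    rw [Finset.coe_image]
    have hvc : coeff v p ≠ 0 := mem_support_iff.mp hv
    have hdeg : v.degree = m := by
      by_contra hne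
      exact hvc (hp.coeff_eq_zero hne)
    have hsum : v 0 + v 1 + v 2 = m := by
      rw [← degree_eq_sum3, hdeg]
    refine ⟨(v 0, v 1), ?_, ?_⟩
    · rw [hS]
      simp only [Finset.coe_filter, Set.mem_setOf_eq, Finset.mem_product, Finset.mem_range]
      omega
    · show Ideal.Quotient.mk I (monomial (expv (v 0) (v 1) (m - v 0 - v 1)) 1)
        = Ideal.Quotient.mk I (monomial v 1)
      congr 2
      rw [show m - v 0 - v 1 = v 2 by omega, ← eq_expv v]
  haveI h1 : FiniteDimensional k (Submodule.span k (↑(S.image f) : Set (MvPolynomial (Fin 3) k ⧸ I))) :=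
    FiniteDimensional.span_finset k _
  have h2 : Module.finrank k (quotPiece k I m)
      ≤ Module.finrank k (Submodule.span k (↑(S.image f) : Set (MvPolynomial (Fin 3) k ⧸ I))) :=
    Submodule.finrank_mono hspan
  have h3 := finrank_span_finset_le_card (R := k) (S.image f)
  have h4 := Finset.card_image_le (s := S) (f := f)
  unfold Set.finrank at h3
  exact le_trans h2 (le_trans h3 h4)

lemma card_le_finrank_quotPiece {d : ℕ} (hd : 3 ≤ d)
    {I : Ideal (MvPolynomial (Fin 3) k)}
    (hI : I = (Ideal.span {X 0, X 1}) ^ d + Ideal.span {(X 2 : MvPolynomial (Fin 3) k) ^ d}) :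
    (((Finset.range d) ×ˢ (Finset.range d)).filter
      (fun p => 2 ≤ p.1 + p.2 ∧ p.1 + p.2 ≤ d - 1)).card ≤
      Module.finrank k (quotPiece k I (d + 1)) := by
  classical
  haveI := quotPiece_fd (k := k) I (d + 1)
  set T := ((Finset.range d) ×ˢ (Finset.range d)).filter
    (fun p => 2 ≤ p.1 + p.2 ∧ p.1 + p.2 ≤ d - 1) with hT
  have hTmem : ∀ p : ℕ × ℕ, p ∈ T → p.1 < d ∧ 2 ≤ p.1 + p.2 ∧ p.1 + p.2 ≤ d - 1 := by
    intro p hp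
    rw [hT, Finset.mem_filter, Finset.mem_product, Finset.mem_range, Finset.mem_range] at hp
    omega
  set τ : ℕ × ℕ → (Fin 3 →₀ ℕ) := fun p => expv p.1 p.2 (d + 1 - p.1 - p.2) with hτ
  have hmemb : ∀ p : ℕ × ℕ, p ∈ T →
      Ideal.Quotient.mk I (monomial (τ p) 1) ∈ quotPiece k I (d + 1) := by
    intro p hp
    obtain ⟨_, h2, h3⟩ := hTmem p hp
    refine ⟨monomial (τ p) 1, ?_, rfl⟩
    rw [SetLike.mem_coe, mem_homogeneousSubmodule]
    apply isHomogeneous_monomial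
    rw [hτ, degree_expv]
    omega
  set vfam : {x // x ∈ T} → quotPiece k I (d + 1) :=
    fun p => ⟨Ideal.Quotient.mk I (monomial (τ p.1) 1), hmemb p.1 p.2⟩ with hv
  have hli : LinearIndependent k vfam := by
    rw [Fintype.linearIndependent_iff]
    intro g hg p₀
    have hg' : ∑ p : {x // x ∈ T}, g p • Ideal.Quotient.mk I (monomial (τ p.1) 1) = 0 := by
      have := congrArg (Subtype.val) hg
      simpa [hv] using this
    have hmk : (Ideal.Quotient.mkₐ k I).toLinearMap
        (∑ p : {x // x ∈ T}, g p • monomial (τ p.1) 1) = 0 := by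
      rw [map_sum]
      rw [← hg']
      refine Finset.sum_congr rfl fun p _ => ?_
      rw [map_smul]
      rfl
    have hPI : (∑ p : {x // x ∈ T}, g p • monomial (τ p.1) (1 : k)) ∈ I := by
      rwa [show (Ideal.Quotient.mkₐ k I).toLinearMap
        (∑ p : {x // x ∈ T}, g p • monomial (τ p.1) 1)
        = Ideal.Quotient.mk I (∑ p : {x // x ∈ T}, g p • monomial (τ p.1) 1) from rfl,
        Ideal.Quotient.eq_zero_iff_mem] at hmk
    obtain ⟨hp1, hp2, hp3⟩ := hTmem p₀.1 p₀.2
    have hco := coeff_eq_zero_of_mem hI hPI (τ p₀.1)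
      (by rw [hτ, expv_apply_zero, expv_apply_one]; omega)
      (by rw [hτ, expv_apply_two]; omega)
    rw [coeff_sum] at hco
    have hterm : ∀ p : {x // x ∈ T}, p ≠ p₀ →
        coeff (τ p₀.1) (g p • monomial (τ p.1) (1 : k)) = 0 := by
      intro p hne
      rw [coeff_smul, coeff_monomial, if_neg, smul_zero]
      intro heq
      apply hne
      have h0 := congrArg (fun μ : Fin 3 →₀ ℕ => μ 0) heq
      have h1 := congrArg (fun μ : Fin 3 →₀ ℕ => μ 1) heq
      simp only [hτ, expv_apply_zero, expv_apply_one] at h0 h1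
      exact Subtype.ext (Prod.ext h0 h1)
    rw [Finset.sum_eq_single p₀ (fun p _ hne => hterm p hne) (by intro h; simp at h)] at hco
    rw [coeff_smul, coeff_monomial, if_pos rfl, smul_eq_mul, mul_one] at hco
    exact hco
  have := hli.fintype_card_le_finrank
  rwa [Fintype.card_coe] at this

lemma card_compare (d : ℕ) (hd : 3 ≤ d) :
    (((Finset.range (d - 2 + 1)) ×ˢ (Finset.range (d - 2 + 1))).filter
      (fun p => p.1 + p.2 ≤ d - 2)).card ≤
    (((Finset.range d) ×ˢ (Finset.range d)).filter
      (fun p => 2 ≤ p.1 + p.2 ∧ p.1 + p.2 ≤ d - 1)).card := by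
  classical
  apply Finset.card_le_card_of_injOn
    (fun p => if p = (0, 0) then (0, 2) else (p.1 + 1, p.2))
  · intro p hp
    simp only [Finset.mem_coe] at hp ⊢; rw [Finset.mem_filter, Finset.mem_product, Finset.mem_range, Finset.mem_range] at hp
    by_cases h0 : p = (0, 0)
    · rw [if_pos h0]
      rw [Finset.mem_filter, Finset.mem_product, Finset.mem_range, Finset.mem_range]
      omega
    · rw [if_neg h0]
      have : ¬(p.1 = 0 ∧ p.2 = 0) := by
        intro ⟨ha, hb⟩; exact h0 (Prod.ext ha hb)
      rw [Finset.mem_filter, Finset.mem_product, Finset.mem_range, Finset.mem_range]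
      omega
  · intro p hp q hq hpq
    dsimp only at hpq
    by_cases h0 : p = (0, 0) <;> by_cases h1 : q = (0, 0)
    · rw [h0, h1]
    · rw [if_pos h0, if_neg h1] at hpq
      have := congrArg Prod.fst hpq
      simp at this
    · rw [if_neg h0, if_pos h1] at hpq
      have := congrArg Prod.fst hpq
      simp at this
    · rw [if_neg h0, if_neg h1] at hpq
      have ha := congrArg Prod.fst hpq
      have hb := congrArg Prod.snd hpq
      simp only at ha hb
      exact Prod.ext (by omega) hb

lemma single_one_ne {i j : Fin 3} (hij : i ≠ j) :
    (Finsupp.single i 1 : Fin 3 →₀ ℕ) ≠ Finsupp.single j 1 := by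
  intro hc
  have h := congrArg (fun f : Fin 3 →₀ ℕ => f i) hc
  simp only [Finsupp.single_apply, if_pos rfl] at h
  rw [if_neg (fun hji : j = i => hij hji.symm)] at h
  exact one_ne_zero h

lemma hom1_decomp {ℓ : MvPolynomial (Fin 3) k} (h : ℓ.IsHomogeneous 1) :
    ℓ = C (coeff (Finsupp.single 0 1) ℓ) * X 0 + C (coeff (Finsupp.single 1 1) ℓ) * X 1
      + C (coeff (Finsupp.single 2 1) ℓ) * X 2 := by
  have hdegs : ∀ t : Fin 3, (Finsupp.single t 1 : Fin 3 →₀ ℕ).degree = 1 := by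
    intro t
    rw [degree_eq_sum3]
    fin_cases t <;> simp [Finsupp.single_apply]
  apply MvPolynomial.ext
  intro μ
  simp only [coeff_add, coeff_C_mul, coeff_X']
  by_cases hdeg : μ.degree = 1
  · have hsum : μ 0 + μ 1 + μ 2 = 1 := by rw [← degree_eq_sum3, hdeg]
    have hcases : (μ 0 = 1 ∧ μ 1 = 0 ∧ μ 2 = 0) ∨ (μ 0 = 0 ∧ μ 1 = 1 ∧ μ 2 = 0)
        ∨ (μ 0 = 0 ∧ μ 1 = 0 ∧ μ 2 = 1) := by omega
    rcases hcases with ⟨h0, h1, h2⟩ | ⟨h0, h1, h2⟩ | ⟨h0, h1, h2⟩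
    · have hμ : μ = Finsupp.single 0 1 := by
        rw [eq_expv μ, h0, h1, h2]
        simp [expv]
      rw [hμ, if_pos rfl, if_neg (single_one_ne (by decide)),
        if_neg (single_one_ne (by decide))]
      ring
    · have hμ : μ = Finsupp.single 1 1 := by
        rw [eq_expv μ, h0, h1, h2]
        simp [expv]
      rw [hμ, if_pos rfl, if_neg (single_one_ne (by decide)),
        if_neg (single_one_ne (by decide))]
      ring
    · have hμ : μ = Finsupp.single 2 1 := by
        rw [eq_expv μ, h0, h1, h2]
        simp [expv]
      rw [hμ, if_pos rfl, if_neg (single_one_ne (by decide)),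
        if_neg (single_one_ne (by decide))]
      ring
  · rw [h.coeff_eq_zero hdeg, if_neg (fun hc => hdeg (by rw [← hc]; exact hdegs 0)),
      if_neg (fun hc => hdeg (by rw [← hc]; exact hdegs 1)),
      if_neg (fun hc => hdeg (by rw [← hc]; exact hdegs 2))]
    ring

lemma kernel_element [CharZero k] {d : ℕ} (hd : 3 ≤ d)
    {I : Ideal (MvPolynomial (Fin 3) k)}
    (hI : I = (Ideal.span {X 0, X 1}) ^ d + Ideal.span {(X 2 : MvPolynomial (Fin 3) k) ^ d})
    (a b c : k) (hab : a ≠ 0 ∨ b ≠ 0) :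
    ∃ F : MvPolynomial (Fin 3) k, F.IsHomogeneous (d - 2) ∧ F ∉ I ∧
      (C a * X 0 + C b * X 1 + C c * X 2) ^ 3 * F ∈ I := by
  have hU : (Ideal.span {X 0, X 1} : Ideal (MvPolynomial (Fin 3) k)) ^ d ≤ I := by
    rw [hI, Ideal.add_eq_sup]; exact le_sup_left
  have hW : Ideal.span {(X 2 : MvPolynomial (Fin 3) k) ^ d} ≤ I := by
    rw [hI, Ideal.add_eq_sup]; exact le_sup_right
  have huhom : (C a * X 0 + C b * X 1 : MvPolynomial (Fin 3) k).IsHomogeneous 1 :=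
    (isHomogeneous_C_mul_X a 0).add (isHomogeneous_C_mul_X b 1)
  have hwhom : (C c * X 2 : MvPolynomial (Fin 3) k).IsHomogeneous 1 :=
    isHomogeneous_C_mul_X c 2
  refine ⟨Fpoly (C a * X 0 + C b * X 1) (C c * X 2) d, Fpoly_isHomogeneous huhom hwhom d hd, ?_, ?_⟩
  · intro hmem
    have hcast : ((slpSeq d (d - 2) : ℤ) : k) ≠ 0 :=
      Int.cast_ne_zero.mpr (slpSeq_top_ne_zero d hd)
    rcases hab with ha | hb
    · have hco := coeff_eq_zero_of_mem hI hmem (Finsupp.single 0 (d - 2))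
        (by simp [Finsupp.single_apply]; omega)
        (by simp [Finsupp.single_apply]; omega)
      rw [coeff_Fpoly d hd a b c 0 1 (by decide) (by decide) ![0,1,0]
        (by intro μ; simp) (by simp)] at hco
      exact (mul_ne_zero hcast (pow_ne_zero _ ha)) hco
    · have hswap : (C a * X 0 + C b * X 1 : MvPolynomial (Fin 3) k)
          = C b * X 1 + C a * X 0 := add_comm _ _
      rw [hswap] at hmem
      have hco := coeff_eq_zero_of_mem hI hmem (Finsupp.single 1 (d - 2))
        (by simp [Finsupp.single_apply]; omega)
        (by simp [Finsupp.single_apply]; omega)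
      rw [coeff_Fpoly d hd b a c 1 0 (by decide) (by decide) ![1,0,0]
        (by intro μ; simp) (by simp)] at hco
      exact (mul_ne_zero hcast (pow_ne_zero _ hb)) hco
  · obtain ⟨c₁, c₂, hid⟩ := slp_key_identity (A := MvPolynomial (Fin 3) k) d hd
      (C a * X 0 + C b * X 1) (C c * X 2)
    rw [show ((C a * X 0 + C b * X 1 + C c * X 2 : MvPolynomial (Fin 3) k)) ^ 3 *
      Fpoly (C a * X 0 + C b * X 1) (C c * X 2) d
      = c₁ * (C c * X 2) ^ d + c₂ * (C a * X 0 + C b * X 1) ^ d from hid]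
    apply Ideal.add_mem
    · rw [mul_pow, ← C_pow]
      exact Ideal.mul_mem_left _ _
        (Ideal.mul_mem_left _ _ (hW (Ideal.subset_span rfl)))
    · refine Ideal.mul_mem_left _ _ (hU (Ideal.pow_mem_pow ?_ d))
      exact add_mem (Ideal.mul_mem_left _ _ (Ideal.subset_span (by simp)))
        (Ideal.mul_mem_left _ _ (Ideal.subset_span (by simp)))

end SLPAux

set_option maxHeartbeats 1000000 in
set_option synthInstance.maxHeartbeats 400000 in
/-- For `I = (x_1, x_2)^d + (x_3^d)` in `k[x_1,x_2,x_3]`, char `k = 0`, `d ≥ 3`: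
`R/I` fails the strong Lefschetz property; multiplication by `ℓ^3` with
`ℓ = x_1 + x_2 + x_3` fails to be injective from degree `d-2` to degree `d+1`
even though `dim A_{d+1} ≥ dim A_{d-2}`. -/
theorem stmt12 (k : Type*) [Field k] [CharZero k] (d : ℕ) (hd : 3 ≤ d)
    (I : Ideal (MvPolynomial (Fin 3) k))
    (hI : I = (Ideal.span {X 0, X 1}) ^ d + Ideal.span {(X 2 : MvPolynomial (Fin 3) k) ^ d}) :
    ¬ StrongLefschetz k I ∧
    Module.finrank k (quotPiece k I (d - 2)) ≤ Module.finrank k (quotPiece k I (d + 1)) ∧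
    ∃ x ∈ quotPiece k I (d - 2), x ≠ 0 ∧
      Ideal.Quotient.mk I ((X 0 + X 1 + X 2 : MvPolynomial (Fin 3) k) ^ 3) * x = 0 := by
  classical
  -- the dimension inequality
  have hdim : Module.finrank k (quotPiece k I (d - 2)) ≤
      Module.finrank k (quotPiece k I (d + 1)) :=
    le_trans (finrank_quotPiece_le I (d - 2))
      (le_trans (card_compare d hd) (card_le_finrank_quotPiece hd hI))
  have hU : (Ideal.span {X 0, X 1} : Ideal (MvPolynomial (Fin 3) k)) ^ d ≤ I := by
    rw [hI, Ideal.add_eq_sup]; exact le_sup_left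
  have hW : Ideal.span {(X 2 : MvPolynomial (Fin 3) k) ^ d} ≤ I := by
    rw [hI, Ideal.add_eq_sup]; exact le_sup_right
  refine ⟨?_, hdim, ?_⟩
  · -- not strong Lefschetz
    rintro ⟨ℓ, hℓmem, hSL⟩
    have hdec := hom1_decomp ((mem_homogeneousSubmodule _ _).mp hℓmem)
    set a := coeff (Finsupp.single 0 1) ℓ with ha'
    set b := coeff (Finsupp.single 1 1) ℓ with hb'
    set c := coeff (Finsupp.single 2 1) ℓ with hc'
    by_cases hcase : (a = 0 ∧ b = 0) ∨ c = 0
    · -- degenerate case: ℓ^d ∈ I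
      have hld : ℓ ^ d ∈ I := by
        rcases hcase with ⟨ha, hb⟩ | hc
        · rw [hdec, ha, hb]
          simp only [map_zero, zero_mul, zero_add]
          rw [mul_pow, ← C_pow]
          exact Ideal.mul_mem_left _ _ (hW (Ideal.subset_span rfl))
        · rw [hdec, hc]
          simp only [map_zero, zero_mul, add_zero]
          refine hU (Ideal.pow_mem_pow ?_ d)
          exact add_mem (Ideal.mul_mem_left _ _ (Ideal.subset_span (by simp)))
            (Ideal.mul_mem_left _ _ (Ideal.subset_span (by simp)))
      rcases hSL d 0 with hinj | hsurj
      · have h1mem : (1 : MvPolynomial (Fin 3) k ⧸ I) ∈ quotPiece k I 0 :=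
          ⟨1, isHomogeneous_one (Fin 3) k, show Ideal.Quotient.mk I 1 = 1 from map_one _⟩
        have h10 := hinj 1 h1mem
          (by rw [mul_one]; exact Ideal.Quotient.eq_zero_iff_mem.mpr hld)
        have h1I : (1 : MvPolynomial (Fin 3) k) ∈ I := by
          rw [← Ideal.Quotient.eq_zero_iff_mem, map_one]
          exact h10
        have hco := coeff_eq_zero_of_mem hI h1I 0 (by simp; omega) (by simp; omega)
        rw [coeff_zero_one] at hco
        exact one_ne_zero hco
      · have hmono : Ideal.Quotient.mk I (monomial (expv 1 0 (d - 1)) (1 : k))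
            ∈ quotPiece k I (0 + d) := by
          refine ⟨monomial (expv 1 0 (d - 1)) 1, ?_, rfl⟩
          rw [SetLike.mem_coe, mem_homogeneousSubmodule]
          apply isHomogeneous_monomial
          rw [degree_expv]
          omega
        obtain ⟨y, hy, hyx⟩ := hsurj hmono
        rw [LinearMap.mulLeft_apply, Ideal.Quotient.eq_zero_iff_mem.mpr hld, zero_mul] at hyx
        have hmI : monomial (expv 1 0 (d - 1)) (1 : k) ∈ I :=
          Ideal.Quotient.eq_zero_iff_mem.mp hyx.symm
        have hco := coeff_eq_zero_of_mem hI hmI (expv 1 0 (d - 1))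
          (by rw [expv_apply_zero, expv_apply_one]; omega)
          (by rw [expv_apply_two]; omega)
        rw [coeff_monomial, if_pos rfl] at hco
        exact one_ne_zero hco
    · -- main case
      have hab : a ≠ 0 ∨ b ≠ 0 := by tauto
      obtain ⟨F, hFhom, hFnot, hFker⟩ := kernel_element hd hI a b c hab
      have hxmem : Ideal.Quotient.mk I F ∈ quotPiece k I (d - 2) := ⟨F, hFhom, rfl⟩
      have hx0 : Ideal.Quotient.mk I F ≠ 0 :=
        fun hc => hFnot (Ideal.Quotient.eq_zero_iff_mem.mp hc)
      have hker : Ideal.Quotient.mk I (ℓ ^ 3) * Ideal.Quotient.mk I F = 0 := by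
        rw [← map_mul, Ideal.Quotient.eq_zero_iff_mem]
        rw [hdec]
        exact hFker
      rcases hSL 3 (d - 2) with hinj | hsurj
      · exact hx0 (hinj _ hxmem hker)
      · rw [show d - 2 + 3 = d + 1 by omega] at hsurj
        haveI := quotPiece_fd (k := k) I (d - 2)
        haveI := quotPiece_fd (k := k) I (d + 1)
        set φ := (LinearMap.mulLeft k (Ideal.Quotient.mk I (ℓ ^ 3))).domRestrict
          (quotPiece k I (d - 2)) with hφ
        have hrange : quotPiece k I (d + 1) ≤ LinearMap.range φ := by
          rw [hφ, LinearMap.range_domRestrict]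
          exact hsurj
        have hkel : (⟨Ideal.Quotient.mk I F, hxmem⟩ : quotPiece k I (d - 2)) ∈ LinearMap.ker φ := by
          rw [LinearMap.mem_ker, hφ, LinearMap.domRestrict_apply, LinearMap.mulLeft_apply]
          exact hker
        have hknt : Nontrivial (LinearMap.ker φ) := by
          refine ⟨⟨⟨⟨Ideal.Quotient.mk I F, hxmem⟩, hkel⟩, 0, ?_⟩⟩
          intro hc
          apply hx0
          have h1 : (⟨Ideal.Quotient.mk I F, hxmem⟩ : quotPiece k I (d - 2)) = 0 :=
            Subtype.ext_iff.mp hc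
          exact Subtype.ext_iff.mp h1
        have hkpos : 0 < Module.finrank k (LinearMap.ker φ) :=
          Module.finrank_pos_iff.mpr hknt
        have hrn := LinearMap.finrank_range_add_finrank_ker φ
        have hd1 : Module.finrank k (quotPiece k I (d + 1)) ≤
            Module.finrank k (LinearMap.range φ) := Submodule.finrank_mono hrange
        omega
  · -- the kernel element for ℓ = X 0 + X 1 + X 2
    obtain ⟨F, hFhom, hFnot, hFker⟩ := kernel_element hd hI (1 : k) 1 1 (Or.inl one_ne_zero)
    refine ⟨Ideal.Quotient.mk I F, ⟨F, hFhom, rfl⟩, ?_, ?_⟩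
    · exact fun hc => hFnot (Ideal.Quotient.eq_zero_iff_mem.mp hc)
    · rw [← map_mul, Ideal.Quotient.eq_zero_iff_mem]
      rw [show (X 0 + X 1 + X 2 : MvPolynomial (Fin 3) k)
        = C (1 : k) * X 0 + C 1 * X 1 + C 1 * X 2 by simp]
      exact hFker
end

section
/- Let d ≥ 3 be an integer and work in the polynomial ring ℚ[y_1, y_2]. Let g_d = Σ_{m=0}^{d} y_1^{d−m} (−y_2)^m (so that (y_1 + y_2)·g_d = y_1^{d+1} − (−y_2)^{d+1}) and let f_d = ∂²g_d/∂y_1∂y_2. Then −(y_1 + y_2)^3 · f_d = (d−1)(y_1^{d+1} − (−y_2)^{d+1}) + (d+1)(y_1^d y_2 + y_1 (−y_2)^d). -/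
open MvPolynomial

/-- The polynomial identity
`-(y_1+y_2)^3 f_d = (d-1)(y_1^{d+1} - (-y_2)^{d+1}) + (d+1)(y_1^d y_2 + y_1 (-y_2)^d)`
where `g_d = Σ_{m=0}^d y_1^{d-m}(-y_2)^m` (so `(y_1+y_2)·g_d = y_1^{d+1} - (-y_2)^{d+1}`)
and `f_d = ∂²g_d/∂y_1∂y_2`, in `ℚ[y_1, y_2]`. -/
theorem stmt14 (d : ℕ) (hd : 3 ≤ d)
    (y1 y2 g f : MvPolynomial (Fin 2) ℚ)
    (hy1 : y1 = X 0) (hy2 : y2 = X 1)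
    (hg : g = ∑ m ∈ Finset.range (d + 1), y1 ^ (d - m) * (-y2) ^ m)
    (hf : f = pderiv 0 (pderiv 1 g)) :
    -((y1 + y2) ^ 3) * f =
      C ((d : ℚ) - 1) * (y1 ^ (d + 1) - (-y2) ^ (d + 1)) +
      C ((d : ℚ) + 1) * (y1 ^ d * y2 + y1 * (-y2) ^ d) := by
  subst hy1 hy2 hf
  have h1 : (X 0 + X 1) * g = (X 0 : MvPolynomial (Fin 2) ℚ) ^ (d + 1) - (-X 1) ^ (d + 1) := by
    have h := geom_sum₂_mul (R := MvPolynomial (Fin 2) ℚ) (x := X 0) (y := -X 1) (n := d + 1)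
    have hrefl : g = ∑ i ∈ Finset.range (d + 1),
        (X 0 : MvPolynomial (Fin 2) ℚ) ^ i * (-X 1) ^ (d + 1 - 1 - i) := by
      rw [hg, ← Finset.sum_range_reflect]
      refine Finset.sum_congr rfl fun j hj => ?_
      simp only [Finset.mem_range] at hj
      rw [show d + 1 - 1 - j = d - j by omega, show d - (d - j) = j by omega]
    rw [hrefl, show (X 0 + X 1 : MvPolynomial (Fin 2) ℚ) = X 0 - -X 1 by ring, mul_comm]
    exact h
  have e2 := congrArg (pderiv (R := ℚ) 0) h1
  have e3 := congrArg (pderiv (R := ℚ) 1) h1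
  simp [pderiv_mul, pderiv_X] at e2 e3
  have e4 := congrArg (pderiv (R := ℚ) 0) e3
  simp [pderiv_mul, pderiv_X] at e4
  have hC1 : C ((d : ℚ) - 1) = (d : MvPolynomial (Fin 2) ℚ) - 1 := by
    push_cast [map_sub, map_natCast, map_one]; norm_cast
  have hC2 : C ((d : ℚ) + 1) = (d : MvPolynomial (Fin 2) ℚ) + 1 := by
    push_cast [map_add, map_natCast, map_one]; norm_cast
  rw [hC1, hC2]
  simp only [pow_succ] at h1 ⊢
  linear_combination (-((X 0 + X 1 : MvPolynomial (Fin 2) ℚ)) ^ 2) * e4 +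
    (X 0 + X 1 : MvPolynomial (Fin 2) ℚ) * e2 +
    (X 0 + X 1 : MvPolynomial (Fin 2) ℚ) * e3 + (-2 : MvPolynomial (Fin 2) ℚ) * h1
end

section
/- Let k be a field, d ≥ 3 an integer, R = k[x_1, x_2, x_3, x_4], I = (x_1, x_2)^d + (x_3^d, x_4^d), and A = R/I. Then dim_k A_{2d−3} = (Σ_{i=1}^{d} i²) + d(d−1)/2 − d and dim_k A_{2d−2} = Σ_{i=1}^{d} i²; in particular dim_k A_{2d−3} ≥ dim_k A_{2d−2}. -/
open MvPolynomial

namespace Stmt16Aux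

open Finset

variable {k : Type*} [Field k]

/-- tuple to exponent finsupp -/
noncomputable def tf (p : ℕ × ℕ × ℕ × ℕ) : Fin 4 →₀ ℕ :=
  Finsupp.single 0 p.1 + Finsupp.single 1 p.2.1 + Finsupp.single 2 p.2.2.1 +
    Finsupp.single 3 p.2.2.2

lemma tf_apply0 (p : ℕ × ℕ × ℕ × ℕ) : tf p 0 = p.1 := by
  simp [tf, Finsupp.single_apply]

lemma tf_apply1 (p : ℕ × ℕ × ℕ × ℕ) : tf p 1 = p.2.1 := by
  simp [tf, Finsupp.single_apply]

lemma tf_apply2 (p : ℕ × ℕ × ℕ × ℕ) : tf p 2 = p.2.2.1 := by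
  simp [tf, Finsupp.single_apply]

lemma tf_apply3 (p : ℕ × ℕ × ℕ × ℕ) : tf p 3 = p.2.2.2 := by
  simp [tf, Finsupp.single_apply]

lemma eq_tf (α : Fin 4 →₀ ℕ) : α = tf (α 0, α 1, α 2, α 3) := by
  ext i
  fin_cases i <;> simp [tf, Finsupp.single_apply]

lemma tf_injective : Function.Injective tf := by
  intro p q h
  have h0 := congrArg (fun f : Fin 4 →₀ ℕ => f 0) h
  have h1 := congrArg (fun f : Fin 4 →₀ ℕ => f 1) h
  have h2 := congrArg (fun f : Fin 4 →₀ ℕ => f 2) h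
  have h3 := congrArg (fun f : Fin 4 →₀ ℕ => f 3) h
  simp only [tf_apply0, tf_apply1, tf_apply2, tf_apply3] at h0 h1 h2 h3
  obtain ⟨a, b, c, e⟩ := p; obtain ⟨a', b', c', e'⟩ := q
  simp_all

lemma degree_eq (α : Fin 4 →₀ ℕ) : α.degree = α 0 + α 1 + α 2 + α 3 := by
  rw [Finsupp.degree_apply, Finset.sum_subset (Finset.subset_univ _)
    (fun x _ hx => Finsupp.notMem_support_iff.mp hx), Fin.sum_univ_four]

lemma monomial_tf (p : ℕ × ℕ × ℕ × ℕ) :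
    (monomial (tf p) (1 : k)) =
      X 0 ^ p.1 * X 1 ^ p.2.1 * X 2 ^ p.2.2.1 * X 3 ^ p.2.2.2 := by
  simp [tf, X_pow_eq_monomial, monomial_mul]

lemma monomial_mem_I (d : ℕ) (α : Fin 4 →₀ ℕ)
    (hα : d ≤ α 0 + α 1 ∨ d ≤ α 2 ∨ d ≤ α 3) :
    monomial α (1 : k) ∈ (Ideal.span {X 0, X 1}) ^ d +
      Ideal.span {(X 2 : MvPolynomial (Fin 4) k) ^ d, (X 3 : MvPolynomial (Fin 4) k) ^ d} := by
  rw [Submodule.add_eq_sup]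
  have hmono : monomial α (1 : k) = X 0 ^ (α 0) * X 1 ^ (α 1) * X 2 ^ (α 2) * X 3 ^ (α 3) := by
    conv_lhs => rw [eq_tf α]
    exact monomial_tf _
  rw [hmono]
  rcases hα with h | h | h
  · have h1 : (X 0 : MvPolynomial (Fin 4) k) ^ (α 0) * X 1 ^ (α 1) ∈
        (Ideal.span {X 0, X 1} : Ideal (MvPolynomial (Fin 4) k)) ^ d := by
      refine Ideal.pow_le_pow_right h ?_
      rw [pow_add]
      exact Ideal.mul_mem_mul (Ideal.pow_mem_pow (Ideal.subset_span (by simp)) _)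
        (Ideal.pow_mem_pow (Ideal.subset_span (by simp)) _)
    exact Submodule.mem_sup_left (Ideal.mul_mem_right _ _ (Ideal.mul_mem_right _ _ h1))
  · have h2 : (X 2 : MvPolynomial (Fin 4) k) ^ (α 2) ∈
        Ideal.span {(X 2 : MvPolynomial (Fin 4) k) ^ d, (X 3 : MvPolynomial (Fin 4) k) ^ d} := by
      rw [show α 2 = (α 2 - d) + d by omega, pow_add]
      exact Ideal.mul_mem_left _ _ (Ideal.subset_span (by simp))
    exact Submodule.mem_sup_right (Ideal.mul_mem_right _ _ (Ideal.mul_mem_left _ _ h2))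
  · have h3 : (X 3 : MvPolynomial (Fin 4) k) ^ (α 3) ∈
        Ideal.span {(X 2 : MvPolynomial (Fin 4) k) ^ d, (X 3 : MvPolynomial (Fin 4) k) ^ d} := by
      rw [show α 3 = (α 3 - d) + d by omega, pow_add]
      exact Ideal.mul_mem_left _ _ (Ideal.subset_span (by simp))
    exact Submodule.mem_sup_right (Ideal.mul_mem_left _ _ h3)

def vanishIdeal (P : (Fin 4 →₀ ℕ) → Prop)
    (hP : ∀ ⦃α β : Fin 4 →₀ ℕ⦄, α ≤ β → P β → P α) :
    Ideal (MvPolynomial (Fin 4) k) where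
  carrier := {f | ∀ α, P α → coeff α f = 0}
  zero_mem' := fun α _ => by simp
  add_mem' := fun {f g} hf hg α hα => by simp [coeff_add, hf α hα, hg α hα]
  smul_mem' := fun c f hf α hα => by
    rw [smul_eq_mul, coeff_mul]
    refine Finset.sum_eq_zero fun q hq => ?_
    rw [Finset.HasAntidiagonal.mem_antidiagonal] at hq
    have h2 : q.2 ≤ α := hq ▸ self_le_add_left q.2 q.1
    rw [hf q.2 (hP h2 hα), mul_zero]

lemma coeff_span01 {f : MvPolynomial (Fin 4) k}
    (hf : f ∈ (Ideal.span {X 0, X 1} : Ideal (MvPolynomial (Fin 4) k)))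
    {α : Fin 4 →₀ ℕ} (hα : α 0 + α 1 < 1) : coeff α f = 0 := by
  have hle : (Ideal.span {X 0, X 1} : Ideal (MvPolynomial (Fin 4) k)) ≤
      vanishIdeal (fun γ => γ 0 + γ 1 < 1)
        (fun γ β h hβ => by
          have h0 := Finsupp.le_def.mp h 0
          have h1 := Finsupp.le_def.mp h 1
          omega) := by
    rw [Ideal.span_le]
    rintro x hx
    simp only [Set.mem_insert_iff, Set.mem_singleton_iff] at hx
    rcases hx with rfl | rfl <;>
    · intro γ hγ
      rw [show (X _ : MvPolynomial (Fin 4) k) = X _ ^ 1 from (pow_one _).symm,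
        X_pow_eq_monomial, coeff_monomial]
      split_ifs with h
      · rw [← h] at hγ; simp [Finsupp.single_apply] at hγ
      · rfl
  exact hle hf α hα

lemma coeff_pow_span {d : ℕ} {f : MvPolynomial (Fin 4) k}
    (hf : f ∈ ((Ideal.span {X 0, X 1} : Ideal (MvPolynomial (Fin 4) k))) ^ d)
    {α : Fin 4 →₀ ℕ} (hα : α 0 + α 1 < d) : coeff α f = 0 := by
  induction d generalizing f α with
  | zero => omega
  | succ n ih =>
    rw [pow_succ] at hf
    refine Submodule.mul_induction_on
      (C := fun f => ∀ α : Fin 4 →₀ ℕ, α 0 + α 1 < n + 1 → coeff α f = 0) hf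
      ?_ ?_ α hα
    · intro g hg s hs β hβ
      rw [coeff_mul]
      refine Finset.sum_eq_zero fun q hq => ?_
      rw [Finset.HasAntidiagonal.mem_antidiagonal] at hq
      have e0 : q.1 0 + q.2 0 = β 0 := by rw [← hq]; simp
      have e1 : q.1 1 + q.2 1 = β 1 := by rw [← hq]; simp
      rcases lt_or_ge (q.1 0 + q.1 1) n with h | h
      · rw [ih hg h, zero_mul]
      · rw [coeff_span01 hs (by omega), mul_zero]
    · intro x y hx hy β hβ
      rw [coeff_add, hx β hβ, hy β hβ, add_zero]

lemma coeff_spanK {d : ℕ} {f : MvPolynomial (Fin 4) k}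
    (hf : f ∈ Ideal.span {(X 2 : MvPolynomial (Fin 4) k) ^ d,
      (X 3 : MvPolynomial (Fin 4) k) ^ d})
    {α : Fin 4 →₀ ℕ} (h2 : α 2 < d) (h3 : α 3 < d) : coeff α f = 0 := by
  have hle : Ideal.span {(X 2 : MvPolynomial (Fin 4) k) ^ d,
      (X 3 : MvPolynomial (Fin 4) k) ^ d} ≤
      vanishIdeal (fun γ => γ 2 < d ∧ γ 3 < d)
        (fun γ β h hβ => by
          have h2 := Finsupp.le_def.mp h 2
          have h3 := Finsupp.le_def.mp h 3
          omega) := by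
    rw [Ideal.span_le]
    rintro x hx
    simp only [Set.mem_insert_iff, Set.mem_singleton_iff] at hx
    rcases hx with rfl | rfl <;>
    · rintro γ ⟨hγ2, hγ3⟩
      rw [X_pow_eq_monomial, coeff_monomial]
      split_ifs with h
      · rw [← h] at hγ2 hγ3; simp [Finsupp.single_apply] at hγ2 hγ3
      · rfl
  exact hle hf α ⟨h2, h3⟩

lemma coeff_I_eq_zero {d : ℕ} {I : Ideal (MvPolynomial (Fin 4) k)}
    (hI : I = (Ideal.span {X 0, X 1}) ^ d +
      Ideal.span {(X 2 : MvPolynomial (Fin 4) k) ^ d, (X 3 : MvPolynomial (Fin 4) k) ^ d})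
    {f : MvPolynomial (Fin 4) k} (hf : f ∈ I) {α : Fin 4 →₀ ℕ}
    (h1 : α 0 + α 1 < d) (h2 : α 2 < d) (h3 : α 3 < d) : coeff α f = 0 := by
  subst hI
  rw [Submodule.add_eq_sup, Submodule.mem_sup] at hf
  obtain ⟨g, hg, h, hh, rfl⟩ := hf
  rw [coeff_add, coeff_pow_span hg h1, coeff_spanK hh h2 h3, add_zero]

/-- the Finset of good exponent tuples of total degree `m` -/
def G (d m : ℕ) : Finset (ℕ × ℕ × ℕ × ℕ) :=
  ((Finset.range d ×ˢ Finset.range d ×ˢ Finset.range d ×ˢ Finset.range d)).filter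
    (fun p => p.1 + p.2.1 + p.2.2.1 + p.2.2.2 = m ∧ p.1 + p.2.1 < d)

lemma mem_G {d m : ℕ} {p : ℕ × ℕ × ℕ × ℕ} : p ∈ G d m ↔
    p.1 + p.2.1 + p.2.2.1 + p.2.2.2 = m ∧ p.1 + p.2.1 < d ∧ p.2.2.1 < d ∧ p.2.2.2 < d := by
  simp only [G, Finset.mem_filter, Finset.mem_product, Finset.mem_range]
  omega

lemma finrank_quotPiece (d : ℕ) (I : Ideal (MvPolynomial (Fin 4) k))
    (hI : I = (Ideal.span {X 0, X 1}) ^ d +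
      Ideal.span {(X 2 : MvPolynomial (Fin 4) k) ^ d, (X 3 : MvPolynomial (Fin 4) k) ^ d})
    (m : ℕ) : Module.finrank k (quotPiece k I m) = (G d m).card := by
  classical
  set L := (Ideal.Quotient.mkₐ k I).toLinearMap with hLdef
  have hL : ∀ a, L a = Ideal.Quotient.mk I a := fun a => rfl
  set w : G d m → MvPolynomial (Fin 4) k := fun p => monomial (tf p.1) 1 with hwdef
  set v : G d m → (MvPolynomial (Fin 4) k ⧸ I) := fun p => L (w p) with hvdef
  have hspan : quotPiece k I m = Submodule.span k (Set.range v) := by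
    rw [quotPiece, homogeneousSubmodule_eq_finsupp_supported,
      AddMonoidAlgebra.supported_eq_span_single, Submodule.map_span]
    apply le_antisymm
    · rw [Submodule.span_le]
      rintro x ⟨y, ⟨α, hα, rfl⟩, rfl⟩
      simp only [Set.mem_setOf_eq] at hα
      by_cases hbad : d ≤ α 0 + α 1 ∨ d ≤ α 2 ∨ d ≤ α 3
      · have hz : L (AddMonoidAlgebra.single α 1) = 0 := by
          rw [single_eq_monomial, hL, Ideal.Quotient.eq_zero_iff_mem, hI]
          exact monomial_mem_I d α hbad
        rw [hz]; exact Submodule.zero_mem _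
      · push_neg at hbad
        have hdeg := degree_eq α
        have hp : (α 0, α 1, α 2, α 3) ∈ G d m := by
          rw [mem_G]; dsimp only; omega
        apply Submodule.subset_span
        exact ⟨⟨_, hp⟩, by
          simp only [hvdef, hwdef]
          rw [single_eq_monomial, ← eq_tf α]⟩
    · rw [Submodule.span_le]
      rintro x ⟨p, rfl⟩
      apply Submodule.subset_span
      refine ⟨AddMonoidAlgebra.single (tf p.1) 1, ⟨tf p.1, ?_, rfl⟩, by rw [single_eq_monomial]⟩
      have := (mem_G.mp p.2).1
      simp only [Set.mem_setOf_eq]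
      rw [degree_eq, tf_apply0, tf_apply1, tf_apply2, tf_apply3]
      exact this
  have hli : LinearIndependent k v := by
    rw [linearIndependent_iff]
    intro l hl
    have hmem : Finsupp.linearCombination k w l ∈ I := by
      rw [← Ideal.Quotient.eq_zero_iff_mem, ← hL, Finsupp.apply_linearCombination]
      exact hl
    have key : ∀ p : G d m, coeff (tf p.1) (Finsupp.linearCombination k w l) = l p := by
      intro p
      rw [Finsupp.linearCombination_apply, Finsupp.sum, coeff_sum]
      rw [Finset.sum_eq_single p]
      · simp [hwdef, coeff_smul, coeff_monomial]
      · intro i _ hip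
        have hne : tf i.1 ≠ tf p.1 := fun h => hip (Subtype.ext (tf_injective h))
        simp [hwdef, coeff_smul, coeff_monomial, hne]
      · intro hp
        rw [Finsupp.notMem_support_iff.mp hp]
        simp
    ext p
    have hcg := mem_G.mp p.2
    have := coeff_I_eq_zero hI hmem
      (α := tf p.1)
      (by rw [tf_apply0, tf_apply1]; omega)
      (by rw [tf_apply2]; omega) (by rw [tf_apply3]; omega)
    rw [key p] at this
    simpa using this
  rw [hspan, finrank_span_eq_card hli, Fintype.card_coe]

lemma card_G (d m : ℕ) (hm : d - 1 ≤ m) :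
    (G d m).card = ∑ s ∈ range d, (s + 1) * min (m - s + 1) (2 * d - 1 - (m - s)) := by
  rw [Finset.card_eq_sum_card_fiberwise
    (f := fun p : ℕ × ℕ × ℕ × ℕ => p.1 + p.2.1) (t := range d)
    (fun p hp => mem_range.mpr (mem_G.mp hp).2.1)]
  refine Finset.sum_congr rfl fun s hs => ?_
  rw [mem_range] at hs
  have himg : (G d m).filter (fun p => p.1 + p.2.1 = s) =
      (Finset.range (s + 1) ×ˢ Finset.range (min (m - s + 1) (2 * d - 1 - (m - s)))).image
        (fun q : ℕ × ℕ =>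
          (q.1, s - q.1, (m - s) - (d - 1) + q.2, (m - s) - ((m - s) - (d - 1) + q.2))) := by
    ext p
    obtain ⟨a, b, c, e⟩ := p
    simp only [Finset.mem_filter, Finset.mem_image, Finset.mem_product, Finset.mem_range,
      mem_G, Prod.mk.injEq, Prod.exists]
    constructor
    · rintro ⟨⟨hsum, hab, hc, he⟩, hps⟩
      refine ⟨a, c - ((m - s) - (d - 1)), ⟨by omega, by omega⟩, by omega, by omega, by omega,
        by omega⟩
    · rintro ⟨i, j, ⟨hi, hj⟩, h1, h2, h3, h4⟩
      refine ⟨⟨by omega, by omega, by omega, by omega⟩, by omega⟩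
  rw [himg, Finset.card_image_of_injOn, Finset.card_product, Finset.card_range,
    Finset.card_range]
  rintro ⟨i1, j1⟩ h1 ⟨i2, j2⟩ h2 heq
  simp only [Finset.coe_product, Set.mem_prod, Finset.mem_coe, Finset.mem_range] at h1 h2
  simp only [Prod.mk.injEq] at heq ⊢
  omega

lemma sum_sq (n : ℕ) : ∑ i ∈ Icc 1 n, i ^ 2 = ∑ s ∈ range n, (s + 1) ^ 2 := by
  induction n with
  | zero => simp
  | succ n ih =>
    rw [Finset.sum_Icc_succ_top (by omega), ih, Finset.sum_range_succ]

lemma card_G_even (d : ℕ) (hd : 3 ≤ d) :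
    (G d (2 * d - 2)).card = ∑ i ∈ Icc 1 d, i ^ 2 := by
  rw [card_G d _ (by omega), sum_sq]
  refine Finset.sum_congr rfl fun s hs => ?_
  rw [mem_range] at hs
  rw [show min (2 * d - 2 - s + 1) (2 * d - 1 - (2 * d - 2 - s)) = s + 1 by omega]
  ring

lemma card_G_odd (d : ℕ) (hd : 3 ≤ d) :
    (G d (2 * d - 3)).card = (∑ i ∈ Icc 1 d, i ^ 2) + d * (d - 1) / 2 - d := by
  rw [card_G d _ (by omega), sum_sq]
  obtain ⟨d', rfl⟩ : ∃ d', d = d' + 1 := ⟨d - 1, by omega⟩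
  rw [Finset.sum_range_succ, Finset.sum_range_succ (fun s => (s + 1) ^ 2)]
  rw [show (d' + 1) * min (2 * (d' + 1) - 3 - d' + 1) (2 * (d' + 1) - 1 - (2 * (d' + 1) - 3 - d'))
      = (d' + 1) * d' by
    rw [show min (2 * (d' + 1) - 3 - d' + 1) (2 * (d' + 1) - 1 - (2 * (d' + 1) - 3 - d')) = d'
      by omega]]
  have hbody : ∑ s ∈ range d',
      (s + 1) * min (2 * (d' + 1) - 3 - s + 1) (2 * (d' + 1) - 1 - (2 * (d' + 1) - 3 - s)) =
      ∑ s ∈ range d', ((s + 1) ^ 2 + (s + 1)) := by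
    refine Finset.sum_congr rfl fun s hs => ?_
    rw [mem_range] at hs
    rw [show min (2 * (d' + 1) - 3 - s + 1) (2 * (d' + 1) - 1 - (2 * (d' + 1) - 3 - s)) = s + 2
      by omega]
    ring
  rw [hbody, Finset.sum_add_distrib]
  have hgauss : ∑ s ∈ range d', (s + 1) = (d' + 1) * d' / 2 := by
    have h1 : ∑ i ∈ range (d' + 1), i = (∑ s ∈ range d', (s + 1)) + 0 :=
      Finset.sum_range_succ' _ _
    have h2 : ∑ i ∈ range (d' + 1), i = (d' + 1) * d' / 2 := by
      rw [Finset.sum_range_id]; simp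
    omega
  rw [hgauss, Nat.add_sub_cancel, show (d' + 1) ^ 2 = (d' + 1) * d' + (d' + 1) by ring]
  omega

end Stmt16Aux

/-- For `I = (x_1, x_2)^d + (x_3^d, x_4^d)` in `k[x_1,…,x_4]` and `d ≥ 3`,
`dim A_{2d-3} = (Σ_{i=1}^d i²) + d(d-1)/2 - d` and `dim A_{2d-2} = Σ_{i=1}^d i²`;
in particular `dim A_{2d-3} ≥ dim A_{2d-2}`. -/
theorem stmt16 (k : Type*) [Field k] (d : ℕ) (hd : 3 ≤ d)
    (I : Ideal (MvPolynomial (Fin 4) k))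
    (hI : I = (Ideal.span {X 0, X 1}) ^ d +
      Ideal.span {(X 2 : MvPolynomial (Fin 4) k) ^ d, (X 3 : MvPolynomial (Fin 4) k) ^ d}) :
    Module.finrank k (quotPiece k I (2 * d - 3)) =
      (∑ i ∈ Finset.Icc 1 d, i ^ 2) + d * (d - 1) / 2 - d ∧
    Module.finrank k (quotPiece k I (2 * d - 2)) = ∑ i ∈ Finset.Icc 1 d, i ^ 2 ∧
    Module.finrank k (quotPiece k I (2 * d - 2)) ≤
      Module.finrank k (quotPiece k I (2 * d - 3)) := by
  rw [Stmt16Aux.finrank_quotPiece d I hI (2 * d - 3),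
    Stmt16Aux.finrank_quotPiece d I hI (2 * d - 2),
    Stmt16Aux.card_G_odd d hd, Stmt16Aux.card_G_even d hd]
  refine ⟨rfl, rfl, ?_⟩
  have hdd : d * 2 ≤ d * (d - 1) := Nat.mul_le_mul_left d (by omega)
  have hq : d ≤ d * (d - 1) / 2 := (Nat.le_div_iff_mul_le (by norm_num)).mpr hdd
  omega
end

section
/- Let k be a field of characteristic zero, d ≥ 3 an integer, R = k[x_1,…,x_5], I = (x_1, x_2)^d + (x_3^d, x_4^d, x_5^d), and ℓ = x_1 + x_2 + x_3 + x_4 + x_5. Let f = (Σ_{m=0}^{d−1} (x_1+x_2)^{d−1−m} (−x_3)^m) · (Σ_{m=0}^{d−1} x_4^{d−1−m} (−x_5)^m), a homogeneous polynomial of degree 2d−2. Then ℓ·f ∈ I while f ∉ I; in particular, the multiplication map ·ℓ : (R/I)_{2d−2} → (R/I)_{2d−1} is not injective. -/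
open MvPolynomial

-- auxiliary: coefficient kills multiples of X i ^ d when exponent too small
lemma aux_coeff_mul_X_pow {k : Type*} [CommSemiring k] {n : ℕ} (a : MvPolynomial (Fin n) k)
    (i : Fin n) (d : ℕ) (μ : Fin n →₀ ℕ) (hμ : μ i < d) :
    MvPolynomial.coeff μ (a * X i ^ d) = 0 := by
  rw [MvPolynomial.coeff_mul]
  apply Finset.sum_eq_zero
  rintro ⟨p, q⟩ hpq
  rw [Finset.HasAntidiagonal.mem_antidiagonal] at hpq
  rw [MvPolynomial.coeff_X_pow]
  split_ifs with h
  · exfalso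
    have hq := DFunLike.congr_fun h i
    simp at hq
    have hmu2 : μ i = p i + q i := by rw [← hpq]; simp
    omega
  · simp

/-- For `I = (x_1,x_2)^d + (x_3^d, x_4^d, x_5^d)` over a field of characteristic
zero and `d ≥ 3`, with `ℓ` the sum of the variables and
`f = ((x_1+x_2)^d - (-x_3)^d)/(x_1+x_2+x_3) · (x_4^d - (-x_5)^d)/(x_4+x_5)`,
we have `ℓ·f ∈ I` and `f ∉ I`; hence `·ℓ : A_{2d-2} → A_{2d-1}` is not injective. -/
theorem stmt17 (k : Type*) [Field k] [CharZero k] (d : ℕ) (hd : 3 ≤ d)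
    (I : Ideal (MvPolynomial (Fin 5) k))
    (hI : I = (Ideal.span {X 0, X 1}) ^ d +
      Ideal.span {(X 2 : MvPolynomial (Fin 5) k) ^ d, (X 3 : MvPolynomial (Fin 5) k) ^ d,
        (X 4 : MvPolynomial (Fin 5) k) ^ d})
    (ℓ f : MvPolynomial (Fin 5) k)
    (hℓ : ℓ = X 0 + X 1 + X 2 + X 3 + X 4)
    (hf : f = (∑ m ∈ Finset.range d, (X 0 + X 1) ^ (d - 1 - m) * (-X 2) ^ m) *
      (∑ m ∈ Finset.range d, (X 3 : MvPolynomial (Fin 5) k) ^ (d - 1 - m) * (-X 4) ^ m)) :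
    ℓ * f ∈ I ∧ f ∉ I ∧
    ¬ (∀ x ∈ quotPiece k I (2 * d - 2), Ideal.Quotient.mk I ℓ * x = 0 → x = 0) := by
  set g1 : MvPolynomial (Fin 5) k :=
    ∑ m ∈ Finset.range d, (X 0 + X 1) ^ (d - 1 - m) * (-X 2) ^ m with hg1
  set g2 : MvPolynomial (Fin 5) k :=
    ∑ m ∈ Finset.range d, (X 3 : MvPolynomial (Fin 5) k) ^ (d - 1 - m) * (-X 4) ^ m with hg2
  -- geometric sum identities
  have hg1' : g1 = ∑ i ∈ Finset.range d, (-X 2 : MvPolynomial (Fin 5) k) ^ i *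
      (X 0 + X 1) ^ (d - 1 - i) := Finset.sum_congr rfl fun i _ => mul_comm _ _
  have hg2' : g2 = ∑ i ∈ Finset.range d, (-X 4 : MvPolynomial (Fin 5) k) ^ i *
      (X 3 : MvPolynomial (Fin 5) k) ^ (d - 1 - i) := Finset.sum_congr rfl fun i _ => mul_comm _ _
  have k1 : (X 0 + X 1 + X 2) * g1 = (X 0 + X 1) ^ d - (-X 2 : MvPolynomial (Fin 5) k) ^ d := by
    have h := geom_sum₂_mul (-X 2 : MvPolynomial (Fin 5) k) (X 0 + X 1) d
    rw [← hg1'] at h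
    linear_combination -h
  have k2 : (X 3 + X 4) * g2 = (X 3 : MvPolynomial (Fin 5) k) ^ d - (-X 4) ^ d := by
    have h := geom_sum₂_mul (-X 4 : MvPolynomial (Fin 5) k) (X 3) d
    rw [← hg2'] at h
    linear_combination -h
  -- membership facts
  have hx01 : (X 0 + X 1 : MvPolynomial (Fin 5) k) ^ d ∈ I := by
    rw [hI, Ideal.add_eq_sup]
    exact Ideal.mem_sup_left (Ideal.pow_mem_pow
      (Ideal.add_mem _ (Ideal.subset_span (by simp)) (Ideal.subset_span (by simp))) d)
  have hx2 : (-X 2 : MvPolynomial (Fin 5) k) ^ d ∈ I := by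
    rw [hI, Ideal.add_eq_sup, neg_pow]
    exact Ideal.mem_sup_right (Ideal.mul_mem_left _ _ (Ideal.subset_span (by simp)))
  have hx3 : (X 3 : MvPolynomial (Fin 5) k) ^ d ∈ I := by
    rw [hI, Ideal.add_eq_sup]
    exact Ideal.mem_sup_right (Ideal.subset_span (by simp))
  have hx4 : (-X 4 : MvPolynomial (Fin 5) k) ^ d ∈ I := by
    rw [hI, Ideal.add_eq_sup, neg_pow]
    exact Ideal.mem_sup_right (Ideal.mul_mem_left _ _ (Ideal.subset_span (by simp)))
  have hlf : ℓ * f ∈ I := by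
    have : ℓ * f = ((X 0 + X 1) ^ d - (-X 2 : MvPolynomial (Fin 5) k) ^ d) * g2 +
        g1 * ((X 3 : MvPolynomial (Fin 5) k) ^ d - (-X 4) ^ d) := by
      rw [hℓ, hf]
      linear_combination g2 * k1 + g1 * k2
    rw [this]
    exact I.add_mem (I.mul_mem_right _ (I.sub_mem hx01 hx2))
      (I.mul_mem_left _ (I.sub_mem hx3 hx4))
  -- the evaluation map
  have hfI : f ∉ I := by
    intro hfI
    set φ : MvPolynomial (Fin 5) k →ₐ[k] MvPolynomial (Fin 2) k :=
      aeval ![X 0, 0, 0, X 1, 0] with hφ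
    set J : Ideal (MvPolynomial (Fin 2) k) :=
      Ideal.span {(X 0 : MvPolynomial (Fin 2) k) ^ d, (X 1 : MvPolynomial (Fin 2) k) ^ d} with hJ
    have hmap : I.map φ ≤ J := by
      rw [hI, Ideal.add_eq_sup, Ideal.map_sup]
      apply sup_le
      · rw [Ideal.map_pow, Ideal.map_span]
        have h1 : φ '' {X 0, X 1} ⊆ {(X 0 : MvPolynomial (Fin 2) k), 0} := by
          rintro x ⟨y, hy, rfl⟩
          rcases hy with rfl | rfl <;> simp [hφ]
        calc (Ideal.span (φ '' {X 0, X 1})) ^ d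
            ≤ (Ideal.span {(X 0 : MvPolynomial (Fin 2) k)}) ^ d := by
              apply Ideal.pow_right_mono
              apply Ideal.span_le.2
              intro x hx
              rcases h1 hx with rfl | rfl
              · exact Ideal.subset_span rfl
              · exact Ideal.zero_mem _
          _ ≤ J := by
              rw [Ideal.span_singleton_pow]
              exact Ideal.span_mono (by simp)
      · rw [Ideal.map_span]
        apply Ideal.span_le.2
        rintro x ⟨y, hy, rfl⟩
        simp only [Set.mem_insert_iff, Set.mem_singleton_iff] at hy
        rcases hy with rfl | rfl | rfl
        · simp [hφ, zero_pow (show d ≠ 0 by omega)]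
        · have h3 : φ ((X 3 : MvPolynomial (Fin 5) k) ^ d) = (X 1 : MvPolynomial (Fin 2) k) ^ d := by
            simp [hφ]
          rw [h3]
          exact Ideal.subset_span (by simp)
        · simp [hφ, zero_pow (show d ≠ 0 by omega)]
    have hφf : φ f = (X 0 : MvPolynomial (Fin 2) k) ^ (d - 1) * X 1 ^ (d - 1) := by
      rw [hf, map_mul, map_sum, map_sum]
      have e1 : ∀ m ∈ Finset.range d,
          φ ((X 0 + X 1) ^ (d - 1 - m) * (-X 2) ^ m) =
          if m = 0 then (X 0 : MvPolynomial (Fin 2) k) ^ (d - 1) else 0 := by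
        intro m _
        rcases eq_or_ne m 0 with rfl | hm
        · simp [hφ]
        · simp [hφ, zero_pow hm, hm]
      have e2 : ∀ m ∈ Finset.range d,
          φ ((X 3 : MvPolynomial (Fin 5) k) ^ (d - 1 - m) * (-X 4) ^ m) =
          if m = 0 then (X 1 : MvPolynomial (Fin 2) k) ^ (d - 1) else 0 := by
        intro m _
        rcases eq_or_ne m 0 with rfl | hm
        · simp [hφ]
        · simp [hφ, zero_pow hm, hm]
      rw [Finset.sum_congr rfl e1, Finset.sum_congr rfl e2, Finset.sum_ite_eq'
        (Finset.range d) 0, Finset.sum_ite_eq' (Finset.range d) 0]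
      simp [Finset.mem_range, show 0 < d by omega]
    have hmem : φ f ∈ J := hmap (Ideal.mem_map_of_mem φ hfI)
    rw [hφf, Ideal.mem_span_pair] at hmem
    obtain ⟨a, b, hab⟩ := hmem
    set μ : Fin 2 →₀ ℕ := Finsupp.single 0 (d - 1) + Finsupp.single 1 (d - 1) with hμ
    have hc : MvPolynomial.coeff μ ((X 0 : MvPolynomial (Fin 2) k) ^ (d - 1) * X 1 ^ (d - 1)) =
        1 := by
      rw [X_pow_eq_monomial, X_pow_eq_monomial, monomial_mul, coeff_monomial, if_pos rfl, mul_one]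
    have hz : MvPolynomial.coeff μ (a * (X 0 : MvPolynomial (Fin 2) k) ^ d +
        b * X 1 ^ d) = 0 := by
      rw [MvPolynomial.coeff_add, aux_coeff_mul_X_pow a 0 d μ (by simp [hμ]; omega),
        aux_coeff_mul_X_pow b 1 d μ (by simp [hμ]; omega), add_zero]
    rw [hab, hc] at hz
    exact one_ne_zero hz
  refine ⟨hlf, hfI, ?_⟩
  -- homogeneity of f
  have hhom : f.IsHomogeneous (2 * d - 2) := by
    have h1 : g1.IsHomogeneous (d - 1) := by
      apply MvPolynomial.IsHomogeneous.sum
      intro m hm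
      rw [Finset.mem_range] at hm
      have : (d - 1 - m) + m = d - 1 := by omega
      have hterm := (((isHomogeneous_X k (0 : Fin 5)).add (isHomogeneous_X k 1)).pow
        (d - 1 - m)).mul (((isHomogeneous_X k (2 : Fin 5)).neg).pow m)
      simp only [one_mul] at hterm
      rwa [this] at hterm
    have h2 : g2.IsHomogeneous (d - 1) := by
      apply MvPolynomial.IsHomogeneous.sum
      intro m hm
      rw [Finset.mem_range] at hm
      have : (d - 1 - m) + m = d - 1 := by omega
      have hterm := ((isHomogeneous_X k (3 : Fin 5)).pow (d - 1 - m)).mul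
        (((isHomogeneous_X k (4 : Fin 5)).neg).pow m)
      simp only [one_mul] at hterm
      rwa [this] at hterm
    have h3 := h1.mul h2
    have he : 2 * d - 2 = (d - 1) + (d - 1) := by omega
    rw [hf, he]
    exact h3
  intro hinj
  have hx : (Ideal.Quotient.mk I f) ∈ quotPiece k I (2 * d - 2) :=
    ⟨f, (mem_homogeneousSubmodule _ _).2 hhom, rfl⟩
  have h0 : Ideal.Quotient.mk I ℓ * Ideal.Quotient.mk I f = 0 := by
    rw [← map_mul, Ideal.Quotient.eq_zero_iff_mem]
    exact hlf
  have := hinj _ hx h0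
  rw [Ideal.Quotient.eq_zero_iff_mem] at this
  exact hfI this
end

section
/- Let k be a field of characteristic zero, d ≥ 3 an integer, write d = 3q + r with 0 ≤ r ≤ 2, and consider F = (X_1 − X_2)^{d−1} (X_3 − X_4)^{q} (X_4 − X_5)^{q} (X_5 − X_3)^{q+r} in k[X_1,…,X_5], a homogeneous polynomial of degree 2d−1. Then: (1) for every monomial generator g of I = (x_1, x_2)^d + (x_3^d, x_4^d, x_5^d), the constant-coefficient differential operator g(∂/∂X_1, …, ∂/∂X_5) annihilates F, i.e., F lies in the inverse system (I^{−1})_{2d−1}; and (2) (∂/∂X_1 + ∂/∂X_2 + ∂/∂X_3 + ∂/∂X_4 + ∂/∂X_5) F = 0. -/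
open MvPolynomial

section Helpers

variable {σ : Type*} [DecidableEq σ] {R : Type*} [CommRing R]

lemma iter_pderiv_zero (i : σ) (n : ℕ) :
    (fun p : MvPolynomial σ R => pderiv i p)^[n] 0 = 0 :=
  Function.iterate_fixed (by simp) n

lemma iter_pderiv_monomial (i : σ) :
    ∀ (n : ℕ) (s : σ →₀ ℕ) (a : R), s i < n →
      (fun p : MvPolynomial σ R => pderiv i p)^[n] (monomial s a) = 0 := by
  intro n
  induction n with
  | zero => intro s a h; omega
  | succ n ih =>
    intro s a h
    simp only [Function.iterate_succ_apply]
    rw [pderiv_monomial]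
    by_cases hs : s i = 0
    · simp [hs, iter_pderiv_zero]
    · apply ih
      have hsub : ((s - Finsupp.single i 1 : σ →₀ ℕ)) i = s i - 1 := by
        rw [Finsupp.tsub_apply, Finsupp.single_apply, if_pos rfl]
      omega

lemma iter_pderiv_eq_zero_of_degreeOf_lt (i : σ) (p : MvPolynomial σ R) (n : ℕ)
    (h : degreeOf i p < n) :
    (fun p : MvPolynomial σ R => pderiv i p)^[n] p = 0 := by
  have hfun : (fun p : MvPolynomial σ R => pderiv i p)
      = ⇑((pderiv i : Derivation R (MvPolynomial σ R) (MvPolynomial σ R)).toLinearMap) := rfl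
  conv_lhs => rw [p.as_sum]
  rw [hfun, ← Module.End.pow_apply, map_sum]
  apply Finset.sum_eq_zero
  intro s hs
  rw [Module.End.pow_apply, ← hfun]
  exact iter_pderiv_monomial i n s _ (lt_of_le_of_lt (monomial_le_degreeOf i hs) h)

lemma iter_pderiv_C_mul (i : σ) (c : R) (n : ℕ) (p : MvPolynomial σ R) :
    (fun p : MvPolynomial σ R => pderiv i p)^[n] (C c * p)
      = C c * (fun p : MvPolynomial σ R => pderiv i p)^[n] p := by
  induction n generalizing p with
  | zero => rfl
  | succ n ih =>
    simp only [Function.iterate_succ_apply]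
    rw [pderiv_C_mul]
    exact ih _

lemma iter_pderiv_key (i : σ) (S G : MvPolynomial σ R) (e : R)
    (hS : pderiv i S = C e) (hG : pderiv i G = 0) (m : ℕ) :
    ∀ b : ℕ, ∃ c : R, (fun p : MvPolynomial σ R => pderiv i p)^[b] (S ^ m * G)
      = C c * (S ^ (m - b) * G) ∧ (m < b → c = 0) := by
  intro b
  induction b with
  | zero => exact ⟨1, by simp, by omega⟩
  | succ b ih =>
    obtain ⟨c, hc, hc0⟩ := ih
    refine ⟨c * ((m - b : ℕ) : R) * e, ?_, ?_⟩
    · simp only [Function.iterate_succ_apply', hc]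
      rw [pderiv_C_mul, pderiv_mul, hG, mul_zero, add_zero, pderiv_pow, hS, Nat.sub_sub]
      simp only [map_mul, map_natCast]
      ring
    · intro h
      rcases Nat.lt_succ_iff_lt_or_eq.mp h with h' | h'
      · simp [hc0 h']
      · simp [h']

lemma degreeOf_X_sub_X_le_one [Nontrivial R] (i a b : σ) :
    degreeOf i (X a - X b : MvPolynomial σ R) ≤ 1 := by
  refine le_trans (degreeOf_sub_le i _ _) (max_le ?_ ?_) <;>
    · rw [degreeOf_X]; split <;> omega

lemma degreeOf_X_sub_X_eq_zero [Nontrivial R] {i a b : σ} (ha : i ≠ a) (hb : i ≠ b) :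
    degreeOf i (X a - X b : MvPolynomial σ R) = 0 := by
  refine Nat.le_zero.mp (le_trans (degreeOf_sub_le i _ _) (max_le ?_ ?_))
  · rw [degreeOf_X, if_neg ha]
  · rw [degreeOf_X, if_neg hb]

lemma degreeOf_X_sub_X_pow_le [Nontrivial R] (i a b : σ) (n : ℕ) :
    degreeOf i ((X a - X b : MvPolynomial σ R) ^ n) ≤ n := by
  refine le_trans (degreeOf_pow_le _ _ _) ?_
  calc n * degreeOf i (X a - X b : MvPolynomial σ R) ≤ n * 1 :=
        Nat.mul_le_mul_left _ (degreeOf_X_sub_X_le_one i a b)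
    _ = n := mul_one n

lemma degreeOf_X_sub_X_pow_eq_zero [Nontrivial R] {i a b : σ} (ha : i ≠ a) (hb : i ≠ b)
    (n : ℕ) : degreeOf i ((X a - X b : MvPolynomial σ R) ^ n) = 0 := by
  refine Nat.le_zero.mp (le_trans (degreeOf_pow_le _ _ _) ?_)
  rw [degreeOf_X_sub_X_eq_zero ha hb, mul_zero]

lemma degreeOf_four_mul_le (i : σ) (p1 p2 p3 p4 : MvPolynomial σ R) (n1 n2 n3 n4 : ℕ)
    (h1 : degreeOf i p1 ≤ n1) (h2 : degreeOf i p2 ≤ n2)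
    (h3 : degreeOf i p3 ≤ n3) (h4 : degreeOf i p4 ≤ n4) :
    degreeOf i (p1 * p2 * p3 * p4) ≤ n1 + n2 + n3 + n4 := by
  have t1 := degreeOf_mul_le i (p1 * p2 * p3) p4
  have t2 := degreeOf_mul_le i (p1 * p2) p3
  have t3 := degreeOf_mul_le i p1 p2
  omega

end Helpers

/-- With `d = 3q + r`, `0 ≤ r ≤ 2`, the polynomial
`F = (X_1-X_2)^{d-1}(X_3-X_4)^q (X_4-X_5)^q (X_5-X_3)^{q+r}` is annihilated by every
monomial generator of `I = (x_1,x_2)^d + (x_3^d,x_4^d,x_5^d)` acting as a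
differential operator (so `F ∈ (I^{-1})_{2d-1}`), and by `∂/∂X_1 + ⋯ + ∂/∂X_5`. -/
theorem stmt19 (k : Type*) [Field k] [CharZero k] (d q r : ℕ) (hd : 3 ≤ d)
    (hqr : d = 3 * q + r) (hr : r ≤ 2)
    (F : MvPolynomial (Fin 5) k)
    (hF : F = (X 0 - X 1) ^ (d - 1) * (X 2 - X 3) ^ q * (X 3 - X 4) ^ q *
      (X 4 - X 2) ^ (q + r)) :
    (∀ a : ℕ, a ≤ d →
      (fun p => pderiv (0 : Fin 5) p)^[a] ((fun p => pderiv (1 : Fin 5) p)^[d - a] F) = 0) ∧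
    (fun p => pderiv (2 : Fin 5) p)^[d] F = 0 ∧
    (fun p => pderiv (3 : Fin 5) p)^[d] F = 0 ∧
    (fun p => pderiv (4 : Fin 5) p)^[d] F = 0 ∧
    pderiv (0 : Fin 5) F + pderiv 1 F + pderiv 2 F + pderiv 3 F + pderiv 4 F = 0 := by
  have hq : 1 ≤ q := by omega
  set S : MvPolynomial (Fin 5) k := X 0 - X 1 with hSdef
  set G : MvPolynomial (Fin 5) k :=
    (X 2 - X 3) ^ q * ((X 3 - X 4) ^ q * (X 4 - X 2) ^ (q + r)) with hGdef
  have hFG : F = S ^ (d - 1) * G := by rw [hF, hSdef, hGdef]; ring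
  have hS0 : pderiv (0 : Fin 5) S = C 1 := by
    rw [hSdef, map_sub, pderiv_X_self, pderiv_X_of_ne (by decide)]; simp
  have hS1 : pderiv (1 : Fin 5) S = C (-1) := by
    rw [hSdef, map_sub, pderiv_X_of_ne (by decide), pderiv_X_self]; simp
  have h02 : pderiv (0 : Fin 5) G = 0 := by
    simp [hGdef, pderiv_mul, pderiv_pow, map_sub,
      pderiv_X_of_ne (show (2 : Fin 5) ≠ 0 by decide),
      pderiv_X_of_ne (show (3 : Fin 5) ≠ 0 by decide),
      pderiv_X_of_ne (show (4 : Fin 5) ≠ 0 by decide)]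
  have h12 : pderiv (1 : Fin 5) G = 0 := by
    simp [hGdef, pderiv_mul, pderiv_pow, map_sub,
      pderiv_X_of_ne (show (2 : Fin 5) ≠ 1 by decide),
      pderiv_X_of_ne (show (3 : Fin 5) ≠ 1 by decide),
      pderiv_X_of_ne (show (4 : Fin 5) ≠ 1 by decide)]
  refine ⟨?_, ?_, ?_, ?_, ?_⟩
  · intro a ha
    obtain ⟨c, hc, hc0⟩ := iter_pderiv_key 1 S G (-1) hS1 h12 (d - 1) (d - a)
    rw [hFG, hc, iter_pderiv_C_mul]
    by_cases h0 : a = 0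
    · rw [hc0 (by omega)]; simp
    · obtain ⟨c', hc', hc0'⟩ := iter_pderiv_key 0 S G 1 hS0 h02 (d - 1 - (d - a)) a
      rw [hc', hc0' (by omega)]; simp
  · apply iter_pderiv_eq_zero_of_degreeOf_lt
    rw [hF]
    refine lt_of_le_of_lt (degreeOf_four_mul_le _ _ _ _ _ 0 q 0 (q + r) ?_ ?_ ?_ ?_) (by omega)
    · exact le_of_eq (degreeOf_X_sub_X_pow_eq_zero (by decide) (by decide) _)
    · exact degreeOf_X_sub_X_pow_le _ _ _ _
    · exact le_of_eq (degreeOf_X_sub_X_pow_eq_zero (by decide) (by decide) _)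
    · exact degreeOf_X_sub_X_pow_le _ _ _ _
  · apply iter_pderiv_eq_zero_of_degreeOf_lt
    rw [hF]
    refine lt_of_le_of_lt (degreeOf_four_mul_le _ _ _ _ _ 0 q q 0 ?_ ?_ ?_ ?_) (by omega)
    · exact le_of_eq (degreeOf_X_sub_X_pow_eq_zero (by decide) (by decide) _)
    · exact degreeOf_X_sub_X_pow_le _ _ _ _
    · exact degreeOf_X_sub_X_pow_le _ _ _ _
    · exact le_of_eq (degreeOf_X_sub_X_pow_eq_zero (by decide) (by decide) _)
  · apply iter_pderiv_eq_zero_of_degreeOf_lt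
    rw [hF]
    refine lt_of_le_of_lt (degreeOf_four_mul_le _ _ _ _ _ 0 0 q (q + r) ?_ ?_ ?_ ?_) (by omega)
    · exact le_of_eq (degreeOf_X_sub_X_pow_eq_zero (by decide) (by decide) _)
    · exact le_of_eq (degreeOf_X_sub_X_pow_eq_zero (by decide) (by decide) _)
    · exact degreeOf_X_sub_X_pow_le _ _ _ _
    · exact degreeOf_X_sub_X_pow_le _ _ _ _
  · rw [hFG, hSdef, hGdef]
    simp only [pderiv_mul, pderiv_pow, map_sub, pderiv_X_self,
      pderiv_X_of_ne (show (0 : Fin 5) ≠ 1 by decide),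
      pderiv_X_of_ne (show (0 : Fin 5) ≠ 2 by decide),
      pderiv_X_of_ne (show (0 : Fin 5) ≠ 3 by decide),
      pderiv_X_of_ne (show (0 : Fin 5) ≠ 4 by decide),
      pderiv_X_of_ne (show (1 : Fin 5) ≠ 0 by decide),
      pderiv_X_of_ne (show (1 : Fin 5) ≠ 2 by decide),
      pderiv_X_of_ne (show (1 : Fin 5) ≠ 3 by decide),
      pderiv_X_of_ne (show (1 : Fin 5) ≠ 4 by decide),
      pderiv_X_of_ne (show (2 : Fin 5) ≠ 0 by decide),
      pderiv_X_of_ne (show (2 : Fin 5) ≠ 1 by decide),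
      pderiv_X_of_ne (show (2 : Fin 5) ≠ 3 by decide),
      pderiv_X_of_ne (show (2 : Fin 5) ≠ 4 by decide),
      pderiv_X_of_ne (show (3 : Fin 5) ≠ 0 by decide),
      pderiv_X_of_ne (show (3 : Fin 5) ≠ 1 by decide),
      pderiv_X_of_ne (show (3 : Fin 5) ≠ 2 by decide),
      pderiv_X_of_ne (show (3 : Fin 5) ≠ 4 by decide),
      pderiv_X_of_ne (show (4 : Fin 5) ≠ 0 by decide),
      pderiv_X_of_ne (show (4 : Fin 5) ≠ 1 by decide),
      pderiv_X_of_ne (show (4 : Fin 5) ≠ 2 by decide),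
      pderiv_X_of_ne (show (4 : Fin 5) ≠ 3 by decide)]
    ring
end
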